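/- arXiv:1009.0276 — 4 statements merged into one kernel-verified Lean document; each statement's English description precedes it below -/
import Mathlib

section
/- Let Λ be a finite set of complex numbers, each of modulus 1, and let c_λ (λ ∈ Λ) be complex numbers. If the sequence n ↦ Σ_{λ∈Λ} c_λ λ^n tends to 0 as n → ∞, then c_λ = 0 for every λ ∈ Λ. -/
open Filter Finset

private lemma aux_geom (r : ℂ) (hr : ‖r‖ = 1) (hr1 : r ≠ 1) :
    Tendsto (fun N : ℕ => (N⁻¹ : ℝ) • ∑ n ∈ Finset.range N, r ^ n) atTop (nhds 0) := by
  have hd : r - 1 ≠ 0 := sub_ne_zero.mpr hr1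
  apply squeeze_zero_norm (a := fun N : ℕ => (N : ℝ)⁻¹ * (2 / ‖r - 1‖))
  · intro N
    rw [geom_sum_eq hr1, norm_smul]
    simp only [norm_inv, Real.norm_natCast]
    gcongr
    rw [norm_div]
    have h1 : ‖r ^ N - 1‖ ≤ 2 := by
      calc ‖r ^ N - 1‖ ≤ ‖r ^ N‖ + ‖(1:ℂ)‖ := norm_sub_le _ _
        _ = 2 := by rw [norm_pow, hr]; norm_num
    have h2 : ‖r - 1‖ = ‖r - 1‖ := rfl
    rw [h2]
    gcongr
  · have h0 : Tendsto (fun N : ℕ => (N : ℝ)⁻¹) atTop (nhds 0) :=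
      tendsto_inv_atTop_nhds_zero_nat
    have := h0.mul_const (2 / ‖r - 1‖)
    simpa using this

theorem stmt_0 (Λ : Finset ℂ) (hΛ : ∀ l ∈ Λ, ‖l‖ = 1) (c : ℂ → ℂ)
    (h : Filter.Tendsto (fun n : ℕ => ∑ l ∈ Λ, c l * l ^ n) Filter.atTop (nhds 0)) :
    ∀ l ∈ Λ, c l = 0 := by
  intro μ hμ
  have hμ1 : ‖μ‖ = 1 := hΛ μ hμ
  have hμ0 : μ ≠ 0 := by intro h0; simp [h0] at hμ1
  set g : ℕ → ℂ := fun n => ∑ l ∈ Λ, c l * (l * μ⁻¹) ^ n with hg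
  have hg0 : Tendsto g atTop (nhds 0) := by
    rw [tendsto_zero_iff_norm_tendsto_zero] at h ⊢
    convert h using 2 with n
    have hgn : g n = (∑ l ∈ Λ, c l * l ^ n) * (μ⁻¹) ^ n := by
      rw [Finset.sum_mul]
      exact Finset.sum_congr rfl fun l _ => by rw [mul_pow]; ring
    rw [hgn, norm_mul, norm_pow]
    simp [hμ1]
  have hces := hg0.cesaro_smul
  have hkey : ∀ N : ℕ, (N⁻¹ : ℝ) • ∑ n ∈ Finset.range N, g n =
      ∑ l ∈ Λ, c l * ((N⁻¹ : ℝ) • ∑ n ∈ Finset.range N, (l * μ⁻¹) ^ n) := by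
    intro N
    rw [Finset.smul_sum]
    simp only [hg, Finset.smul_sum]
    rw [Finset.sum_comm]
    refine Finset.sum_congr rfl fun l _ => ?_
    rw [Finset.mul_sum]
    exact Finset.sum_congr rfl fun n _ => (mul_smul_comm _ _ _).symm
  have hces' : Tendsto (fun N : ℕ => ∑ l ∈ Λ, c l *
      ((N⁻¹ : ℝ) • ∑ n ∈ Finset.range N, (l * μ⁻¹) ^ n)) atTop (nhds 0) :=
    hces.congr hkey
  have hlim : Tendsto (fun N : ℕ => ∑ l ∈ Λ, c l *
      ((N⁻¹ : ℝ) • ∑ n ∈ Finset.range N, (l * μ⁻¹) ^ n)) atTop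
      (nhds (∑ l ∈ Λ, if l = μ then c μ else 0)) := by
    refine tendsto_finset_sum _ fun l hl => ?_
    by_cases hlμ : l = μ
    · simp only [if_pos hlμ]
      have hev : ∀ᶠ N : ℕ in atTop,
          c l * ((N⁻¹ : ℝ) • ∑ n ∈ Finset.range N, (l * μ⁻¹) ^ n) = c μ := by
        filter_upwards [Filter.eventually_ge_atTop 1] with N hN
        rw [hlμ, mul_inv_cancel₀ hμ0]
        simp only [one_pow, Finset.sum_const, Finset.card_range, nsmul_eq_mul, mul_one]
        rw [Complex.real_smul]
        push_cast
        have hN0 : (N:ℂ) ≠ 0 := by exact_mod_cast Nat.one_le_iff_ne_zero.mp hN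
        field_simp
      have hev' : (fun N : ℕ => c l * ((N⁻¹ : ℝ) • ∑ n ∈ Finset.range N, (l * μ⁻¹) ^ n))
          =ᶠ[atTop] fun _ => c μ := hev
      exact Tendsto.congr' hev'.symm tendsto_const_nhds
    · simp only [if_neg hlμ]
      have hr : ‖l * μ⁻¹‖ = 1 := by
        rw [norm_mul, norm_inv, hΛ l hl, hμ1]; norm_num
      have hr1 : l * μ⁻¹ ≠ 1 := by
        intro h1
        apply hlμ
        field_simp at h1
        exact h1
      have := (aux_geom _ hr hr1).const_mul (c l)
      simpa using this
  have hfin := tendsto_nhds_unique hces' hlim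
  rw [Finset.sum_ite_eq' Λ μ (fun _ => c μ), if_pos hμ] at hfin
  exact hfin.symm
end

section
/- Let (a_n) be a sequence of complex numbers, r > 0, Λ a finite set of complex numbers of modulus r, and suppose c_λ (λ ∈ Λ) are complex numbers, not all zero, such that a_n r^{-n}/h(n) − Σ_{λ∈Λ} c_λ (λ/r)^n → 0, where h(n) = (log n)^β / n^α for some rational α and natural β. Then limsup_{n→∞} |a_n|^{1/n} = r. -/
open Filter Finset

lemma aux_not_tendsto (Λ : Finset ℂ) (c : ℂ → ℂ) (g : ℂ → ℂ)
    (hg : Set.InjOn g Λ) (h1 : ∀ l ∈ Λ, ‖g l‖ = 1) (μ : ℂ) (hμ : μ ∈ Λ)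
    (hcμ : c μ ≠ 0)
    (hS : Tendsto (fun n : ℕ => ∑ l ∈ Λ, c l * (g l) ^ n) atTop (nhds 0)) :
    False := by
  have hgμ : ‖g μ‖ = 1 := h1 μ hμ
  have hgμ0 : g μ ≠ 0 := by
    intro h0; rw [h0] at hgμ; simp at hgμ
  set w : ℂ := (g μ)⁻¹ with hw_def
  have hw : ‖w‖ = 1 := by rw [hw_def, norm_inv, hgμ]; norm_num
  set S : ℕ → ℂ := fun n => ∑ l ∈ Λ, c l * (g l) ^ n with hS_def
  have hu : Tendsto (fun n : ℕ => S n * w ^ n) atTop (nhds 0) := by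
    rw [tendsto_zero_iff_norm_tendsto_zero] at hS ⊢
    convert hS using 2 with n
    rw [norm_mul, norm_pow, hw, one_pow, mul_one]
  have hA := hu.cesaro_smul
  -- rewrite the Cesàro averages
  have hrw : ∀ N : ℕ, ((N : ℝ)⁻¹ • ∑ n ∈ Finset.range N, S n * w ^ n)
      = ∑ l ∈ Λ, c l * ((N : ℂ)⁻¹ * ∑ n ∈ Finset.range N, (g l * w) ^ n) := by
    intro N
    have : ((N : ℝ)⁻¹ • ∑ n ∈ Finset.range N, S n * w ^ n)
        = (N : ℂ)⁻¹ * ∑ n ∈ Finset.range N, ∑ l ∈ Λ, c l * (g l * w) ^ n := by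
      rw [Complex.real_smul]
      push_cast
      congr 1
      refine Finset.sum_congr rfl fun n _ => ?_
      rw [hS_def, Finset.sum_mul]
      refine Finset.sum_congr rfl fun l _ => ?_
      ring
    rw [this, Finset.sum_comm, Finset.mul_sum]
    refine Finset.sum_congr rfl fun l _ => ?_
    rw [Finset.mul_sum, Finset.mul_sum, Finset.mul_sum]
    refine Finset.sum_congr rfl fun n _ => ?_
    ring
  have hA' : Tendsto (fun N : ℕ =>
      ∑ l ∈ Λ, c l * ((N : ℂ)⁻¹ * ∑ n ∈ Finset.range N, (g l * w) ^ n))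
      atTop (nhds 0) := by
    apply hA.congr
    intro N; exact hrw N
  -- each term tends to (if l = μ then c μ else 0)
  have hterm : ∀ l ∈ Λ, Tendsto (fun N : ℕ =>
      c l * ((N : ℂ)⁻¹ * ∑ n ∈ Finset.range N, (g l * w) ^ n)) atTop
      (nhds (if l = μ then c μ else 0)) := by
    intro l hl
    by_cases hlμ : l = μ
    · subst hlμ
      rw [if_pos rfl]
      refine Tendsto.congr' ?_ (tendsto_const_nhds (x := c l))
      filter_upwards [eventually_ge_atTop 1] with N hN
      have hglw : g l * w = 1 := by rw [hw_def, mul_inv_cancel₀ hgμ0]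
      rw [hglw]
      simp only [one_pow, Finset.sum_const, Finset.card_range, nsmul_eq_mul, mul_one]
      rw [inv_mul_cancel₀ (by exact_mod_cast Nat.one_le_iff_ne_zero.mp hN), mul_one]
    · rw [if_neg hlμ]
      set z : ℂ := g l * w with hz_def
      have hznorm : ‖z‖ = 1 := by rw [hz_def, norm_mul, h1 l hl, hw, one_mul]
      have hz1 : z ≠ 1 := by
        intro hz
        apply hlμ
        apply hg hl hμ
        have h2 : g l * (g μ)⁻¹ = 1 := by rw [← hw_def]; exact hz
        field_simp at h2
        exact h2
      have hzsub : ‖z - 1‖ ≠ 0 := by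
        simp only [ne_eq, norm_eq_zero, sub_eq_zero]; exact hz1
      apply squeeze_zero_norm (a := fun N : ℕ => ‖c l‖ * ((N : ℝ)⁻¹ * (2 / ‖z - 1‖)))
      · intro N
        rw [norm_mul, norm_mul]
        gcongr
        · rw [norm_inv, Complex.norm_natCast]
        · rw [geom_sum_eq hz1]
          rw [norm_div]
          gcongr
          calc ‖z ^ N - 1‖ ≤ ‖z ^ N‖ + ‖(1 : ℂ)‖ := norm_sub_le _ _
            _ = 2 := by rw [norm_pow, hznorm, one_pow, norm_one]; norm_num
      · have : Tendsto (fun N : ℕ => (N : ℝ)⁻¹) atTop (nhds 0) :=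
          tendsto_inv_atTop_nhds_zero_nat
        have := (this.mul_const (2 / ‖z - 1‖)).const_mul ‖c l‖
        simpa using this
  have hsum : Tendsto (fun N : ℕ =>
      ∑ l ∈ Λ, c l * ((N : ℂ)⁻¹ * ∑ n ∈ Finset.range N, (g l * w) ^ n)) atTop
      (nhds (∑ l ∈ Λ, if l = μ then c μ else 0)) :=
    tendsto_finset_sum _ hterm
  have : (∑ l ∈ Λ, if l = μ then c μ else 0) = c μ := by
    rw [Finset.sum_ite_eq' Λ μ (fun _ => c μ)]
    simp [hμ]
  rw [this] at hsum
  exact hcμ (tendsto_nhds_unique hsum hA')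

open Filter Finset Real

lemma aux_log_div (α : ℚ) (β : ℕ) (C : ℝ) (hC : 0 < C) :
    Tendsto (fun n : ℕ => (C * (Real.log n ^ β / (n : ℝ) ^ ((α : ℝ)))) ^ (1 / (n : ℝ)))
      atTop (nhds 1) := by
  have h3 : ∀ᶠ n : ℕ in atTop, 1 ≤ Real.log n := by
    filter_upwards [eventually_ge_atTop 3] with n hn
    rw [Real.le_log_iff_exp_le (by positivity)]
    calc Real.exp 1 ≤ 2.7182818286 := (Real.exp_one_lt_d9).le
      _ ≤ (n : ℝ) := by
        have : (3 : ℝ) ≤ n := by exact_mod_cast hn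
        linarith
  -- log n / n → 0
  have hlogn : Tendsto (fun n : ℕ => Real.log n / (n : ℝ)) atTop (nhds 0) := by
    have h := Real.tendsto_pow_log_div_mul_add_atTop 1 0 1 one_ne_zero
    simp only [pow_one, one_mul, add_zero] at h
    exact h.comp tendsto_natCast_atTop_atTop
  -- log (log n) / n → 0 by squeeze
  have hloglog : Tendsto (fun n : ℕ => Real.log (Real.log n) / (n : ℝ)) atTop (nhds 0) := by
    apply tendsto_of_tendsto_of_tendsto_of_le_of_le' tendsto_const_nhds hlogn
    · filter_upwards [h3, eventually_ge_atTop 1] with n h1 hn1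
      have : 0 ≤ Real.log (Real.log n) := Real.log_nonneg h1
      positivity
    · filter_upwards [h3, eventually_ge_atTop 1] with n h1 hn1
      have hpos : (0 : ℝ) < n := by exact_mod_cast hn1
      refine (div_le_div_iff_of_pos_right hpos).mpr ?_
      calc Real.log (Real.log n) ≤ Real.log n - 1 :=
          Real.log_le_sub_one_of_pos (by linarith)
        _ ≤ Real.log n := by linarith
  have hconst : Tendsto (fun n : ℕ => Real.log C / (n : ℝ)) atTop (nhds 0) :=
    tendsto_const_div_atTop_nhds_zero_nat _
  -- exponent tends to 0
  have hexp : Tendsto (fun n : ℕ =>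
      (Real.log C + (β : ℝ) * Real.log (Real.log n) - (α : ℝ) * Real.log n) / (n : ℝ))
      atTop (nhds 0) := by
    have := (hconst.add (hloglog.const_mul (β : ℝ))).sub (hlogn.const_mul (α : ℝ))
    simp only [mul_zero, add_zero, sub_zero, zero_add] at this
    apply this.congr
    intro n
    field_simp
  have := (Real.continuous_exp.tendsto 0).comp hexp
  rw [Real.exp_zero] at this
  apply this.congr'
  filter_upwards [h3, eventually_ge_atTop 1] with n h1 hn1
  have hpos : (0 : ℝ) < n := by exact_mod_cast hn1
  have hlogpos : (0 : ℝ) < Real.log n := by linarith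
  have hnum : (0 : ℝ) < Real.log n ^ β := by positivity
  have hden : (0 : ℝ) < (n : ℝ) ^ ((α : ℝ)) := Real.rpow_pos_of_pos hpos _
  have hprod : (0 : ℝ) < C * (Real.log n ^ β / (n : ℝ) ^ ((α : ℝ))) := by positivity
  show Real.exp (_ / (n : ℝ)) = _
  rw [Real.rpow_def_of_pos hprod]
  congr 1
  rw [Real.log_mul (ne_of_gt hC) (by positivity), Real.log_div (ne_of_gt hnum) (ne_of_gt hden),
    Real.log_pow, Real.log_rpow hpos]
  rw [mul_one_div]
  ring

open Filter Finset Real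

lemma aux_log_ge_one : ∀ n : ℕ, 3 ≤ n → 1 ≤ Real.log n := by
  intro n hn
  rw [Real.le_log_iff_exp_le (by positivity)]
  calc Real.exp 1 ≤ 2.7182818286 := (Real.exp_one_lt_d9).le
    _ ≤ (n : ℝ) := by
      have : (3 : ℝ) ≤ n := by exact_mod_cast hn
      linarith

theorem stmt_5 (a : ℕ → ℂ) (r : ℝ) (hr : 0 < r) (Λ : Finset ℂ)
    (hΛ : ∀ l ∈ Λ, ‖l‖ = r) (c : ℂ → ℂ)
    (hc : ∃ l ∈ Λ, c l ≠ 0) (α : ℚ) (β : ℕ)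
    (h : Filter.Tendsto
      (fun n : ℕ =>
        a n * (r : ℂ) ^ (-(n : ℤ)) / (((Real.log n) ^ β / (n : ℝ) ^ ((α : ℝ)) : ℝ) : ℂ)
          - ∑ l ∈ Λ, c l * (l / (r : ℂ)) ^ n)
      Filter.atTop (nhds 0)) :
    Filter.limsup (fun n : ℕ => ‖a n‖ ^ (1 / (n : ℝ))) Filter.atTop = r := by
  have hrC : (r : ℂ) ≠ 0 := by exact_mod_cast ne_of_gt hr
  set hfun : ℕ → ℝ := fun n => Real.log n ^ β / (n : ℝ) ^ ((α : ℝ)) with hfun_def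
  set S : ℕ → ℂ := fun n => ∑ l ∈ Λ, c l * (l / (r : ℂ)) ^ n with hS_def
  set b : ℕ → ℂ := fun n => a n * (r : ℂ) ^ (-(n : ℤ)) / ((hfun n : ℝ) : ℂ) with hb_def
  have h' : Tendsto (fun n => b n - S n) atTop (nhds 0) := h
  set u : ℕ → ℝ := fun n => ‖a n‖ ^ (1 / (n : ℝ)) with hu_def
  -- positivity of hfun
  have hpos : ∀ n : ℕ, 3 ≤ n → 0 < hfun n := by
    intro n hn
    have h1 := aux_log_ge_one n hn
    have hn0 : (0 : ℝ) < n := by positivity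
    have : (0 : ℝ) < Real.log n ^ β := by positivity
    exact div_pos this (Real.rpow_pos_of_pos hn0 _)
  -- |a n| = |b n| * hfun n * r^n  for n ≥ 3
  have habs : ∀ n : ℕ, 3 ≤ n → ‖a n‖ = ‖b n‖ * hfun n * r ^ n := by
    intro n hn
    have hh := hpos n hn
    have hhC : ((hfun n : ℝ) : ℂ) ≠ 0 := by exact_mod_cast ne_of_gt hh
    have ha : a n = b n * ((hfun n : ℝ) : ℂ) * (r : ℂ) ^ n := by
      rw [hb_def]
      simp only [zpow_neg, zpow_natCast]
      field_simp
    rw [ha, norm_mul, norm_mul, norm_pow, Complex.norm_real, Real.norm_eq_abs,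
      Complex.norm_real, Real.norm_eq_abs, abs_of_pos hh, abs_of_pos hr]
  -- bridge identity
  have hbridge : ∀ (C : ℝ) (n : ℕ), 0 ≤ C → 3 ≤ n →
      ((C * hfun n) * r ^ n) ^ (1 / (n : ℝ)) = (C * hfun n) ^ (1 / (n : ℝ)) * r := by
    intro C n hC hn
    have hn0 : (0 : ℝ) < n := by positivity
    have h1 : (0 : ℝ) ≤ C * hfun n := mul_nonneg hC (hpos n hn).le
    rw [Real.mul_rpow h1 (by positivity)]
    congr 1
    rw [← Real.rpow_natCast r n, ← Real.rpow_mul hr.le, mul_one_div,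
      div_self (ne_of_gt hn0), Real.rpow_one]
  -- S does not tend to 0
  have hkey : ¬ Tendsto S atTop (nhds 0) := by
    obtain ⟨μ, hμ, hcμ⟩ := hc
    intro hT
    refine aux_not_tendsto Λ c (fun l => l / (r : ℂ)) ?_ ?_ μ hμ hcμ hT
    · intro x hx y hy hxy
      field_simp at hxy
      exact hxy
    · intro l hl
      simp only [norm_div, hΛ l hl]
      rw [Complex.norm_real, Real.norm_eq_abs, abs_of_pos hr, div_self (ne_of_gt hr)]
  -- frequently |S n| ≥ ε
  obtain ⟨ε, hε, hfreq⟩ : ∃ ε > 0, ∃ᶠ n in atTop, ε ≤ ‖S n‖ := by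
    by_contra hcon
    push_neg at hcon
    apply hkey
    rw [Metric.tendsto_atTop]
    intro δ hδ
    have := hcon δ hδ
    obtain ⟨N, hN⟩ := eventually_atTop.mp this
    exact ⟨N, fun n hn => by
      rw [Complex.dist_eq, sub_zero]
      exact hN n hn⟩
  -- |S n| ≤ M
  set M : ℝ := ∑ l ∈ Λ, ‖c l‖ with hM_def
  have hSb : ∀ n : ℕ, ‖S n‖ ≤ M := by
    intro n
    rw [hS_def]
    refine (norm_sum_le _ _).trans ?_
    apply Finset.sum_le_sum
    intro l hl
    rw [norm_mul, norm_pow, norm_div, hΛ l hl, Complex.norm_real,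
      Real.norm_eq_abs, abs_of_pos hr, div_self (ne_of_gt hr), one_pow, mul_one]
  have hMpos : (0 : ℝ) < M + 1 := by
    have : (0 : ℝ) ≤ M := Finset.sum_nonneg fun l _ => (norm_nonneg _)
    linarith
  -- |b n| eventually ≤ M + 1
  have hb_bound : ∀ᶠ n in atTop, ‖b n‖ ≤ M + 1 := by
    have h1 := Metric.tendsto_nhds.mp h' 1 one_pos
    filter_upwards [h1] with n hn
    rw [Complex.dist_eq, sub_zero] at hn
    have h2 : ‖b n‖ ≤ ‖b n - S n‖ + ‖S n‖ := by
      have : b n = (b n - S n) + S n := by ring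
      calc ‖b n‖ = ‖(b n - S n) + S n‖ := by rw [← this]
        _ ≤ _ := norm_add_le _ _
    have := hSb n
    linarith
  -- upper bound eventuality
  have hub : ∀ᶠ n in atTop, u n ≤ ((M + 1) * hfun n) ^ (1 / (n : ℝ)) * r := by
    filter_upwards [hb_bound, eventually_ge_atTop 3] with n hbn hn3
    have hh := hpos n hn3
    have h1 : ‖a n‖ ≤ ((M + 1) * hfun n) * r ^ n := by
      rw [habs n hn3]
      gcongr
    rw [← hbridge (M + 1) n hMpos.le hn3]
    exact Real.rpow_le_rpow (norm_nonneg _) h1 (by positivity)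
  have hv_tendsto : Tendsto (fun n : ℕ => ((M + 1) * hfun n) ^ (1 / (n : ℝ)) * r)
      atTop (nhds r) := by
    have := (aux_log_div α β (M + 1) hMpos).mul_const r
    rwa [one_mul] at this
  have hbdd : IsBoundedUnder (· ≤ ·) atTop u :=
    hv_tendsto.isBoundedUnder_le.mono_le hub
  have hcobdd : IsCoboundedUnder (· ≤ ·) atTop u :=
    isCoboundedUnder_le_of_le atTop (x := 0) fun n => Real.rpow_nonneg (norm_nonneg _) _
  have hup : limsup u atTop ≤ r := by
    calc limsup u atTop ≤ limsup (fun n : ℕ => ((M + 1) * hfun n) ^ (1 / (n : ℝ)) * r) atTop :=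
          limsup_le_limsup hub hcobdd hv_tendsto.isBoundedUnder_le
      _ = r := hv_tendsto.limsup_eq
  -- lower bound
  have hε2 : (0 : ℝ) < ε / 2 := by linarith
  have hfreq2 : ∃ᶠ n in atTop, ((ε / 2) * hfun n) ^ (1 / (n : ℝ)) * r ≤ u n := by
    have hev : ∀ᶠ n in atTop, ‖b n - S n‖ < ε / 2 := by
      have h1 := Metric.tendsto_nhds.mp h' (ε / 2) hε2
      filter_upwards [h1] with n hn
      rwa [Complex.dist_eq, sub_zero] at hn
    refine (hfreq.and_eventually (hev.and (eventually_ge_atTop 3))).mono ?_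
    rintro n ⟨hSn, hdist, hn3⟩
    have hh := hpos n hn3
    have h1 : ε / 2 ≤ ‖b n‖ := by
      have h2 : ‖S n‖ ≤ ‖b n‖ + ‖b n - S n‖ := by
        have heq : S n = b n - (b n - S n) := by ring
        calc ‖S n‖ = ‖b n - (b n - S n)‖ := by rw [← heq]
          _ ≤ _ := by
            exact norm_sub_le _ _
      linarith
    have h2 : ((ε / 2) * hfun n) * r ^ n ≤ ‖a n‖ := by
      rw [habs n hn3]
      gcongr
    rw [← hbridge (ε / 2) n hε2.le hn3]
    exact Real.rpow_le_rpow (by positivity) h2 (by positivity)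
  have hv2 : Tendsto (fun n : ℕ => ((ε / 2) * hfun n) ^ (1 / (n : ℝ)) * r)
      atTop (nhds r) := by
    have := (aux_log_div α β (ε / 2) hε2).mul_const r
    rwa [one_mul] at this
  have hlow : r ≤ limsup u atTop := by
    by_contra hlt
    push_neg at hlt
    set L := limsup u atTop with hL_def
    set m := (L + r) / 2 with hm_def
    have hm1 : L < m := by rw [hm_def]; linarith
    have hm2 : m < r := by rw [hm_def]; linarith
    have hev2 : ∀ᶠ n in atTop, m ≤ ((ε / 2) * hfun n) ^ (1 / (n : ℝ)) * r :=
      (hv2.eventually (eventually_gt_nhds hm2)).mono fun n hn => hn.le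
    have hfm : ∃ᶠ n in atTop, m ≤ u n :=
      (hfreq2.and_eventually hev2).mono fun n ⟨ha1, ha2⟩ => ha2.trans ha1
    have := le_limsup_of_frequently_le hfm hbdd
    rw [← hL_def] at this
    linarith
  exact le_antisymm hup hlow
end

section
/- Suppose a complex sequence (a_n) admits two minimal asymptotic expansions of Nilsson type, indexed by (Ω, Λ, c) and (Ω', Λ', c'), where Λ, Λ' are finite sets of nonzero complex numbers of common modulus r and r' respectively, Ω, Ω' are well-ordered index sets of Nilsson monomials, and minimality means each row and column of the coefficient array contains a nonzero entry. Then Ω = Ω', Λ = Λ', and c_{ω,λ} = c'_{ω,λ} for all (ω,λ). -/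
/-- The order on Nilsson monomial indices: `(α,β) < (α',β')` iff `α < α'` or
(`α = α'` and `β' < β`). -/
def NilssonLt (p q : ℚ × ℕ) : Prop := p.1 < q.1 ∨ (p.1 = q.1 ∧ q.2 < p.2)

def NilssonLe (p q : ℚ × ℕ) : Prop := NilssonLt p q ∨ p = q

/-- The Nilsson monomial `h_{(α,β)}(n) = (log n)^β / n^α`. -/
noncomputable def nilssonMonomial (p : ℚ × ℕ) (n : ℕ) : ℝ :=
  (Real.log n) ^ p.2 / (n : ℝ) ^ ((p.1 : ℝ))

/-- The index set `Ω = (S + ℕ) × {0, …, d}`. -/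
def OmegaSet (S : Finset ℚ) (d : ℕ) : Set (ℚ × ℕ) :=
  {p | (∃ s ∈ S, ∃ m : ℕ, p.1 = s + m) ∧ p.2 ≤ d}

/-- `a_n ∼ Σ_{ω∈Ω} h_ω(n) Σ_{λ∈Λ} c_{ω,λ} λ^n`: for every `ω ∈ Ω`,
`(a_n r^{-n} − Σ_{ω' ≤ ω} h_{ω'}(n) Σ_λ c_{ω',λ}(λ/r)^n)/h_ω(n) → 0`,
and some coefficient is nonzero. -/
noncomputable def IsNilssonExpansion (a : ℕ → ℂ) (Ω : Set (ℚ × ℕ)) (Λ : Finset ℂ)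
    (r : ℝ) (c : ℚ × ℕ → ℂ → ℂ) : Prop :=
  (∀ ω ∈ Ω, Filter.Tendsto
    (fun n : ℕ =>
      (a n * (r : ℂ) ^ (-(n : ℤ)) -
        ∑ᶠ ω' ∈ {ω' | ω' ∈ Ω ∧ NilssonLe ω' ω},
          ((nilssonMonomial ω' n : ℝ) : ℂ) * ∑ l ∈ Λ, c ω' l * (l / (r : ℂ)) ^ n)
      / ((nilssonMonomial ω n : ℝ) : ℂ))
    Filter.atTop (nhds 0))
  ∧ ∃ ω ∈ Ω, ∃ l ∈ Λ, c ω l ≠ 0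

open Filter Finset Real
open scoped Topology

lemma nlt_irrefl (p : ℚ × ℕ) : ¬ NilssonLt p p := by
  rintro (h | ⟨-, h⟩) <;> exact lt_irrefl _ h

lemma nlt_trans {p q s : ℚ × ℕ} (h : NilssonLt p q) (h' : NilssonLt q s) : NilssonLt p s := by
  rcases h with h | ⟨e, h⟩ <;> rcases h' with h' | ⟨e', h'⟩
  · exact Or.inl (h.trans h')
  · exact Or.inl (e' ▸ h)
  · exact Or.inl (e ▸ h')
  · exact Or.inr ⟨e.trans e', h'.trans h⟩

lemma nle_refl (p : ℚ × ℕ) : NilssonLe p p := Or.inr rfl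

lemma nlt_of_lt_of_le {p q s : ℚ × ℕ} (h : NilssonLt p q) (h' : NilssonLe q s) :
    NilssonLt p s := by rcases h' with h' | rfl; exacts [nlt_trans h h', h]

lemma nle_trans {p q s : ℚ × ℕ} (h : NilssonLe p q) (h' : NilssonLe q s) : NilssonLe p s := by
  rcases h with h | rfl; exacts [Or.inl (nlt_of_lt_of_le h h'), h']

lemma nlt_total (p q : ℚ × ℕ) : NilssonLt p q ∨ p = q ∨ NilssonLt q p := by
  rcases lt_trichotomy p.1 q.1 with h | h | h
  · exact Or.inl (Or.inl h)
  · rcases lt_trichotomy p.2 q.2 with h2 | h2 | h2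
    · exact Or.inr (Or.inr (Or.inr ⟨h.symm, h2⟩))
    · exact Or.inr (Or.inl (Prod.ext h h2))
    · exact Or.inl (Or.inr ⟨h, h2⟩)
  · exact Or.inr (Or.inr (Or.inl h))

lemma nle_fst {p q : ℚ × ℕ} (h : NilssonLe p q) : p.1 ≤ q.1 := by
  rcases h with (h | ⟨e, _⟩) | rfl
  exacts [h.le, e.le, le_rfl]


lemma tendsto_mul_bdd {f g : ℕ → ℂ} (hf : Tendsto f atTop (𝓝 0)) {C : ℝ}
    (hg : ∀ᶠ n in atTop, ‖g n‖ ≤ C) : Tendsto (fun n => f n * g n) atTop (𝓝 0) := by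
  have h0 : Tendsto (fun n => ‖f n‖ * C) atTop (𝓝 0) := by
    simpa using (hf.norm.mul_const C)
  refine squeeze_zero_norm' ?_ h0
  filter_upwards [hg] with n hn
  calc ‖f n * g n‖ = ‖f n‖ * ‖g n‖ := norm_mul _ _
    _ ≤ ‖f n‖ * C := mul_le_mul_of_nonneg_left hn (norm_nonneg _)

lemma cesaro_geom {μ : ℂ} (hμ : ‖μ‖ = 1) (hne : μ ≠ 1) :
    Tendsto (fun N : ℕ => ((N : ℝ)⁻¹) • ∑ n ∈ range N, μ ^ n) atTop (𝓝 0) := by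
  have hd : (0:ℝ) < ‖μ - 1‖ := by
    rw [norm_pos_iff]; exact sub_ne_zero.mpr hne
  have hb : ∀ N : ℕ, ‖∑ n ∈ range N, μ ^ n‖ ≤ 2 / ‖μ - 1‖ := by
    intro N
    rw [geom_sum_eq hne, norm_div]
    have h2 : ‖μ ^ N - 1‖ ≤ 2 := by
      calc ‖μ ^ N - 1‖ ≤ ‖μ ^ N‖ + ‖(1:ℂ)‖ := norm_sub_le _ _
        _ = 2 := by rw [norm_pow, hμ]; norm_num
    exact div_le_div_of_nonneg_right h2 hd.le |>.trans_eq rfl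
  have h0 : Tendsto (fun N : ℕ => (N : ℝ)⁻¹ * (2 / ‖μ - 1‖)) atTop (𝓝 0) := by
    simpa using (tendsto_inv_atTop_nhds_zero_nat (𝕜 := ℝ)).mul_const (2 / ‖μ - 1‖)
  refine squeeze_zero_norm ?_ h0
  intro N
  rw [norm_smul, norm_inv, Real.norm_natCast]
  exact mul_le_mul_of_nonneg_left (hb N) (by positivity)

/-- If a unit-modulus exponential polynomial tends to zero, all its coefficients vanish. -/
lemma trig_zero (Λ : Finset ℂ) (r : ℝ) (hr : 0 < r) (hnorm : ∀ l ∈ Λ, ‖l‖ = r)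
    (co : ℂ → ℂ)
    (h : Tendsto (fun n : ℕ => ∑ l ∈ Λ, co l * (l / (r : ℂ)) ^ n) atTop (𝓝 0)) :
    ∀ l ∈ Λ, co l = 0 := by
  intro l₀ hl₀
  have hl₀ne : l₀ ≠ 0 := by
    intro e; have := hnorm l₀ hl₀; rw [e, norm_zero] at this; exact hr.ne this
  -- the modified sequence
  set u : ℕ → ℂ := fun n => ∑ l ∈ Λ, co l * (l / l₀) ^ n with hu
  have hrne : (r : ℂ) ≠ 0 := by
    simp only [ne_eq, Complex.ofReal_eq_zero]; exact hr.ne'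
  have hueq : ∀ n : ℕ, u n = (∑ l ∈ Λ, co l * (l / (r : ℂ)) ^ n) * ((r : ℂ) / l₀) ^ n := by
    intro n
    rw [Finset.sum_mul]
    refine Finset.sum_congr rfl fun l hl => ?_
    rw [mul_assoc, ← mul_pow, div_mul_div_comm]
    congr 2
    rw [mul_comm l (r:ℂ)]
    rw [mul_div_mul_left _ _ hrne]
  have hu0 : Tendsto u atTop (𝓝 0) := by
    rw [show u = fun n => (∑ l ∈ Λ, co l * (l / (r : ℂ)) ^ n) * ((r : ℂ) / l₀) ^ n from
      funext hueq]
    refine tendsto_mul_bdd h (C := 1) (Eventually.of_forall fun n => ?_)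
    rw [norm_pow, norm_div, Complex.norm_real, Real.norm_of_nonneg hr.le, hnorm l₀ hl₀,
      div_self hr.ne', one_pow]
  -- Cesàro average
  have hces := hu0.cesaro_smul
  -- compute the average differently
  have hswap : ∀ N : ℕ, ((N : ℝ)⁻¹) • ∑ n ∈ range N, u n
      = ∑ l ∈ Λ, co l * (((N : ℝ)⁻¹) • ∑ n ∈ range N, (l / l₀) ^ n) := by
    intro N
    rw [hu, Finset.sum_comm]
    rw [Finset.smul_sum]
    refine Finset.sum_congr rfl fun l hl => ?_
    rw [← Finset.mul_sum, mul_smul_comm]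
  have hlim : Tendsto (fun N : ℕ => ∑ l ∈ Λ, co l * (((N : ℝ)⁻¹) • ∑ n ∈ range N, (l / l₀) ^ n))
      atTop (𝓝 (∑ l ∈ Λ, if l = l₀ then co l else 0)) := by
    refine tendsto_finset_sum _ fun l hl => ?_
    by_cases e : l = l₀
    · rw [if_pos e]
      have hstep : ∀ᶠ N : ℕ in atTop,
          co l * (((N : ℝ)⁻¹) • ∑ n ∈ range N, (l / l₀) ^ n) = co l := by
        filter_upwards [eventually_gt_atTop 0] with N hN
        have hN' : ((N:ℂ)) ≠ 0 := by exact_mod_cast hN.ne'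
        rw [e, div_self hl₀ne]
        simp only [one_pow, Finset.sum_const, Finset.card_range, nsmul_eq_mul, mul_one,
          Complex.real_smul, Complex.ofReal_inv, Complex.ofReal_natCast]
        field_simp
      exact Tendsto.congr' (Filter.EventuallyEq.symm hstep) tendsto_const_nhds
    · rw [if_neg e]
      have hμ1 : ‖l / l₀‖ = 1 := by
        rw [norm_div, hnorm l hl, hnorm l₀ hl₀, div_self hr.ne']
      have hμne : l / l₀ ≠ 1 := by
        intro h1
        apply e
        have h2 := congrArg (· * l₀) h1
        simpa [div_mul_cancel₀ _ hl₀ne] using h2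
      simpa using (cesaro_geom hμ1 hμne).const_mul (co l)
  have := tendsto_nhds_unique (hces.congr hswap) hlim
  rw [Finset.sum_ite_eq' Λ l₀ co, if_pos hl₀] at this
  exact this.symm



lemma log_ge_one {n : ℕ} (hn : 3 ≤ n) : 1 ≤ Real.log n := by
  have h3 : (3:ℝ) ≤ n := by exact_mod_cast hn
  have : (1:ℝ) < Real.log 3 := by
    rw [Real.lt_log_iff_exp_lt (by norm_num)]
    calc Real.exp 1 < 2.7182818286 := Real.exp_one_lt_d9
      _ < 3 := by norm_num
  exact le_trans this.le (Real.log_le_log (by norm_num) h3)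

lemma monomial_pos (p : ℚ × ℕ) {n : ℕ} (hn : 3 ≤ n) : 0 < nilssonMonomial p n := by
  have hn' : (0:ℝ) < n := by positivity
  have hl : 0 < Real.log n := lt_of_lt_of_le one_pos (log_ge_one hn)
  exact div_pos (pow_pos hl _) (Real.rpow_pos_of_pos hn' _)

lemma tendsto_log_pow_div_rpow (k : ℕ) {e : ℝ} (he : 0 < e) :
    Tendsto (fun n : ℕ => (Real.log n) ^ k / (n : ℝ) ^ e) atTop (𝓝 0) := by
  have h := (isLittleO_log_rpow_rpow_atTop (k : ℝ) he).comp_tendsto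
    (tendsto_natCast_atTop_atTop (R := ℝ))
  have h2 := h.tendsto_div_nhds_zero
  refine h2.congr fun n => ?_
  simp [Function.comp, Real.rpow_natCast]

lemma ratio_tendsto {p q : ℚ × ℕ} (h : NilssonLt p q) :
    Tendsto (fun n : ℕ => nilssonMonomial q n / nilssonMonomial p n) atTop (𝓝 0) := by
  rcases h with h | ⟨he, h2⟩
  · -- q.1 > p.1
    set e : ℝ := (q.1 : ℝ) - (p.1 : ℝ) with hedef
    have he : 0 < e := sub_pos.mpr (by exact_mod_cast h)
    refine squeeze_zero' ?_ ?_ (tendsto_log_pow_div_rpow q.2 he)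
    · filter_upwards [eventually_ge_atTop 3] with n hn
      exact (div_pos (monomial_pos q hn) (monomial_pos p hn)).le
    · filter_upwards [eventually_ge_atTop 3] with n hn
      have hn' : (0:ℝ) < n := by positivity
      have hL := log_ge_one hn
      have key : nilssonMonomial q n / nilssonMonomial p n
          = ((Real.log n) ^ q.2 / (Real.log n) ^ p.2) / (n : ℝ) ^ e := by
        rw [nilssonMonomial, nilssonMonomial, div_div_div_comm, hedef,
          Real.rpow_sub hn']
      rw [key]
      apply div_le_div_of_nonneg_right ?_ (Real.rpow_pos_of_pos hn' e).le
      exact div_le_self (pow_nonneg (by linarith) _) (one_le_pow₀ hL)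
  · -- equal first coords, q.2 < p.2
    have : Tendsto (fun n : ℕ => (Real.log n) ^ (p.2 - q.2)) atTop atTop :=
      (tendsto_pow_atTop (by omega)).comp
        (Real.tendsto_log_atTop.comp (tendsto_natCast_atTop_atTop (R := ℝ)))
    have h0 := this.inv_tendsto_atTop
    refine h0.congr' ?_
    filter_upwards [eventually_ge_atTop 3] with n hn
    have hL : (0:ℝ) < Real.log n := lt_of_lt_of_le one_pos (log_ge_one hn)
    have hn' : (0:ℝ) < n := by positivity
    have key : nilssonMonomial q n / nilssonMonomial p n = ((Real.log n) ^ (p.2 - q.2))⁻¹ := by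
      rw [nilssonMonomial, nilssonMonomial, he, div_div_div_comm,
        div_self (ne_of_gt (Real.rpow_pos_of_pos hn' _)), div_one,
        pow_sub₀ _ (ne_of_gt hL) h2.le]
      field_simp
    show ((Real.log n) ^ (p.2 - q.2))⁻¹ = nilssonMonomial q n / nilssonMonomial p n
    rw [key]

lemma monomial_bound (p : ℚ × ℕ) : ∃ K : ℕ, ∀ᶠ n : ℕ in atTop,
    |nilssonMonomial p n| ≤ (n:ℝ) ^ K ∧ |(nilssonMonomial p n)⁻¹| ≤ (n:ℝ) ^ K := by
  obtain ⟨K, hK⟩ := exists_nat_ge (max ((p.2 : ℝ) - (p.1 : ℝ)) ((p.1 : ℝ)))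
  refine ⟨K, ?_⟩
  filter_upwards [eventually_ge_atTop 3] with n hn
  have hn1 : (1:ℝ) ≤ n := by
    have : (3:ℝ) ≤ n := by exact_mod_cast hn
    linarith
  have hn' : (0:ℝ) < n := by linarith
  have hL1 := log_ge_one hn
  have hpos := monomial_pos p hn
  constructor
  · rw [abs_of_pos hpos, nilssonMonomial]
    have hlog : (Real.log n) ^ p.2 ≤ (n:ℝ) ^ p.2 := by
      apply pow_le_pow_left₀ (by linarith) ?_
      calc Real.log n ≤ n - 1 := Real.log_le_sub_one_of_pos hn'
        _ ≤ n := by linarith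
    calc (Real.log n) ^ p.2 / (n : ℝ) ^ ((p.1 : ℝ))
        ≤ (n:ℝ) ^ p.2 / (n : ℝ) ^ ((p.1 : ℝ)) :=
          div_le_div_of_nonneg_right hlog (Real.rpow_pos_of_pos hn' _).le
      _ = (n:ℝ) ^ ((p.2:ℝ) - (p.1:ℝ)) := by
          rw [Real.rpow_sub hn', Real.rpow_natCast]
      _ ≤ (n:ℝ) ^ ((K:ℝ)) := Real.rpow_le_rpow_of_exponent_le hn1
          (le_trans (le_max_left _ _) hK)
      _ = (n:ℝ) ^ K := Real.rpow_natCast _ _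
  · rw [abs_of_pos (inv_pos.mpr hpos), nilssonMonomial, inv_div]
    calc (n : ℝ) ^ ((p.1 : ℝ)) / (Real.log n) ^ p.2
        ≤ (n : ℝ) ^ ((p.1 : ℝ)) / 1 := by
          apply div_le_div_of_nonneg_left (Real.rpow_pos_of_pos hn' _).le one_pos
            (one_le_pow₀ hL1) |>.trans_eq rfl
      _ = (n : ℝ) ^ ((p.1 : ℝ)) := div_one _
      _ ≤ (n:ℝ) ^ ((K:ℝ)) := Real.rpow_le_rpow_of_exponent_le hn1
          (le_trans (le_max_right _ _) hK)
      _ = (n:ℝ) ^ K := Real.rpow_natCast _ _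

lemma exp_poly (K : ℕ) {ρ : ℝ} (h0 : 0 ≤ ρ) (h1 : ρ < 1) :
    Tendsto (fun n : ℕ => ρ ^ n * (n:ℝ) ^ K) atTop (𝓝 0) := by
  have hs : Summable (fun n : ℕ => ‖(n:ℝ) ^ K * ρ ^ n‖) :=
    summable_norm_pow_mul_geometric_of_norm_lt_one K
      (by rwa [Real.norm_eq_abs, abs_of_nonneg h0])
  have := (Summable.of_norm hs).tendsto_atTop_zero
  exact this.congr fun n => mul_comm _ _



lemma lower_finite (S : Finset ℚ) (d : ℕ) (ω : ℚ × ℕ) :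
    {ω' | ω' ∈ OmegaSet S d ∧ NilssonLe ω' ω}.Finite := by
  classical
  set F : Finset (ℚ × ℕ) :=
    (S.biUnion fun s => (Finset.range ((⌈ω.1 - s⌉).toNat + 1)).image (fun m : ℕ => s + (m:ℚ))) ×ˢ
      Finset.range (d+1) with hF
  apply Set.Finite.subset (F.finite_toSet)
  rintro p ⟨⟨⟨s, hs, m, hm⟩, hβ⟩, hle⟩
  have hfst := nle_fst hle
  have hmle : (m : ℚ) ≤ ω.1 - s := by rw [hm] at hfst; linarith
  have hml : m < (⌈ω.1 - s⌉).toNat + 1 := by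
    have h1 : (m : ℚ) ≤ (⌈ω.1 - s⌉ : ℚ) := le_trans hmle (Int.le_ceil _)
    have h2 : (m : ℤ) ≤ ⌈ω.1 - s⌉ := by exact_mod_cast h1
    have h3 : (m : ℤ) ≤ ((⌈ω.1 - s⌉).toNat : ℤ) := le_trans h2 (Int.self_le_toNat _)
    omega
  refine Finset.mem_coe.mpr ?_
  rw [hF, Finset.mem_product]
  constructor
  · rw [Finset.mem_biUnion]
    refine ⟨s, hs, ?_⟩
    rw [Finset.mem_image]
    exact ⟨m, Finset.mem_range.mpr hml, hm.symm⟩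
  · exact Finset.mem_range.mpr (by omega)

lemma lowerStrict_finite (S : Finset ℚ) (d : ℕ) (ω : ℚ × ℕ) :
    {ω' | ω' ∈ OmegaSet S d ∧ NilssonLt ω' ω}.Finite := by
  apply (lower_finite S d ω).subset
  rintro p ⟨h1, h2⟩; exact ⟨h1, Or.inl h2⟩

lemma exists_ge (S : Finset ℚ) (d : ℕ) (hS : S.Nonempty) (ω : ℚ × ℕ) :
    ∃ ω₂ ∈ OmegaSet S d, NilssonLe ω ω₂ := by
  obtain ⟨s, hs⟩ := hS
  refine ⟨(s + (((⌈ω.1 - s⌉).toNat + 1 : ℕ) : ℚ), 0), ⟨⟨s, hs, _, rfl⟩, Nat.zero_le _⟩,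
    Or.inl (Or.inl ?_)⟩
  show ω.1 < s + _
  have h1 : ω.1 - s ≤ (⌈ω.1 - s⌉ : ℚ) := Int.le_ceil _
  have h2 : ((⌈ω.1 - s⌉ : ℤ) : ℚ) ≤ (((⌈ω.1 - s⌉).toNat : ℤ) : ℚ) := by
    exact_mod_cast Int.self_le_toNat _
  push_cast at h2 ⊢
  linarith

lemma min_mem (S : Finset ℚ) (d : ℕ) (hS : S.Nonempty) :
    (S.min' hS, d) ∈ OmegaSet S d :=
  ⟨⟨S.min' hS, S.min'_mem hS, 0, by simp⟩, le_rfl⟩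

lemma min_lowerStrict (S : Finset ℚ) (d : ℕ) (hS : S.Nonempty) :
    {ω' | ω' ∈ OmegaSet S d ∧ NilssonLt ω' (S.min' hS, d)} = ∅ := by
  ext p
  simp only [Set.mem_setOf_eq, Set.mem_empty_iff_false, iff_false, not_and]
  rintro ⟨⟨s, hs, m, hm⟩, hβ⟩ (hlt | ⟨heq, hlt⟩)
  · have : S.min' hS ≤ s := S.min'_le s hs
    have : (0:ℚ) ≤ m := by positivity
    simp only at hlt
    rw [hm] at hlt; linarith
  · exact absurd hβ (by omega)

lemma exists_common_den (T : Finset ℚ) : ∃ N : ℕ, 0 < N ∧ ∀ s ∈ T, ∃ k : ℤ, (s:ℚ) * N = k := by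
  classical
  induction T using Finset.induction with
  | empty => exact ⟨1, one_pos, fun s hs => absurd hs (Finset.notMem_empty s)⟩
  | insert a T hnotmem ih =>
    obtain ⟨N, hN, h⟩ := ih
    refine ⟨N * a.den, Nat.mul_pos hN a.pos, fun s hs => ?_⟩
    rcases Finset.mem_insert.mp hs with rfl | hs
    · refine ⟨s.num * N, ?_⟩
      have hden : (s.den : ℚ) ≠ 0 := by exact_mod_cast s.den_nz
      have hnum := Rat.num_div_den s
      rw [div_eq_iff hden] at hnum
      push_cast
      linear_combination (N:ℚ) * hnum.symm
    · obtain ⟨k, hk⟩ := h s hs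
      refine ⟨k * a.den, ?_⟩
      push_cast
      rw [← mul_assoc, hk]


lemma finsum_lower_eq {M : Type*} [AddCommMonoid M] (S : Finset ℚ) (d : ℕ) (ω : ℚ × ℕ)
    (g : ℚ × ℕ → M) :
    ∑ᶠ ω' ∈ {ω' | ω' ∈ OmegaSet S d ∧ NilssonLe ω' ω}, g ω'
      = ∑ ω' ∈ (lower_finite S d ω).toFinset, g ω' := by
  rw [← finsum_mem_coe_finset, Set.Finite.coe_toFinset]

lemma ratioC_tendsto {p q : ℚ × ℕ} (h : NilssonLt p q) :
    Tendsto (fun n : ℕ => ((nilssonMonomial q n : ℝ) : ℂ) / ((nilssonMonomial p n : ℝ) : ℂ))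
      atTop (𝓝 0) := by
  have h1 := (Complex.continuous_ofReal.tendsto 0).comp (ratio_tendsto h)
  rw [Complex.ofReal_zero] at h1
  refine h1.congr fun n => ?_
  simp [Function.comp, Complex.ofReal_div]

lemma qbound (Λ : Finset ℂ) (r : ℝ) (hr : 0 < r) (hΛ : ∀ l ∈ Λ, ‖l‖ = r)
    (co : ℂ → ℂ) (n : ℕ) :
    ‖∑ l ∈ Λ, co l * (l / (r : ℂ)) ^ n‖ ≤ ∑ l ∈ Λ, ‖co l‖ := by
  refine (norm_sum_le _ _).trans (Finset.sum_le_sum fun l hl => ?_)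
  rw [norm_mul, norm_pow, norm_div, Complex.norm_real, Real.norm_of_nonneg hr.le,
    hΛ l hl, div_self hr.ne', one_pow, mul_one]

open scoped Classical in
lemma tailEst (a : ℕ → ℂ) (S : Finset ℚ) (d : ℕ) (Λ : Finset ℂ) (r : ℝ)
    (c : ℚ × ℕ → ℂ → ℂ) (hr : 0 < r) (hΛ : ∀ l ∈ Λ, ‖l‖ = r) (hS : S.Nonempty)
    (htd : ∀ ω ∈ OmegaSet S d, Tendsto
      (fun n : ℕ =>
        (a n * (r : ℂ) ^ (-(n : ℤ)) -
          ∑ᶠ ω' ∈ {ω' | ω' ∈ OmegaSet S d ∧ NilssonLe ω' ω},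
            ((nilssonMonomial ω' n : ℝ) : ℂ) * ∑ l ∈ Λ, c ω' l * (l / (r : ℂ)) ^ n)
        / ((nilssonMonomial ω n : ℝ) : ℂ)) atTop (𝓝 0))
    (ω : ℚ × ℕ) :
    Tendsto (fun n : ℕ =>
      (a n * (r : ℂ) ^ (-(n : ℤ)) -
        ∑ ω' ∈ (lowerStrict_finite S d ω).toFinset,
          ((nilssonMonomial ω' n : ℝ) : ℂ) * ∑ l ∈ Λ, c ω' l * (l / (r : ℂ)) ^ n)
      / ((nilssonMonomial ω n : ℝ) : ℂ)
      - (if ω ∈ OmegaSet S d then ∑ l ∈ Λ, c ω l * (l / (r : ℂ)) ^ n else 0))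
    atTop (𝓝 0) := by
  classical
  obtain ⟨ω₂, hω₂, hle⟩ := exists_ge S d hS ω
  have E₂ := htd ω₂ hω₂
  simp only [finsum_lower_eq] at E₂
  set H : ℚ × ℕ → ℕ → ℂ := fun p n => ((nilssonMonomial p n : ℝ) : ℂ) with hH
  set q : ℚ × ℕ → ℕ → ℂ := fun p n => ∑ l ∈ Λ, c p l * (l / (r : ℂ)) ^ n with hq
  set A : ℕ → ℂ := fun n => a n * (r : ℂ) ^ (-(n : ℤ)) with hA
  set F₂ : Finset (ℚ × ℕ) := (lower_finite S d ω₂).toFinset with hF₂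
  set Fs : Finset (ℚ × ℕ) := (lowerStrict_finite S d ω).toFinset with hFs
  set T : Finset (ℚ × ℕ) := (F₂ \ Fs).erase ω with hT
  have hsub : Fs ⊆ F₂ := by
    intro p hp
    rw [hFs, Set.Finite.mem_toFinset] at hp
    rw [hF₂, Set.Finite.mem_toFinset]
    exact ⟨hp.1, nle_trans (Or.inl hp.2) hle⟩
  -- nonvanishing of monomials
  have hHne : ∀ p : ℚ × ℕ, ∀ n : ℕ, 3 ≤ n → H p n ≠ 0 := by
    intro p n hn
    rw [hH]
    simp only [ne_eq, Complex.ofReal_eq_zero]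
    exact (monomial_pos p hn).ne'
  -- the split of the F₂-sum
  have hsplit : ∀ n : ℕ, ∑ ω' ∈ F₂, H ω' n * q ω' n
      = (∑ ω' ∈ Fs, H ω' n * q ω' n)
        + ((if ω ∈ OmegaSet S d then H ω n * q ω n else 0)
        + ∑ ω' ∈ T, H ω' n * q ω' n) := by
    intro n
    rw [← Finset.sum_sdiff hsub, add_comm]
    congr 1
    by_cases hmem : ω ∈ OmegaSet S d
    · have hωmem : ω ∈ F₂ \ Fs := by
        rw [Finset.mem_sdiff, hF₂, hFs, Set.Finite.mem_toFinset, Set.Finite.mem_toFinset]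
        exact ⟨⟨hmem, hle⟩, fun hc => nlt_irrefl ω hc.2⟩
      rw [if_pos hmem, hT]
      exact (Finset.add_sum_erase _ (fun x => H x n * q x n) hωmem).symm
    · have hωnot : ω ∉ F₂ \ Fs := by
        rw [Finset.mem_sdiff, hF₂, Set.Finite.mem_toFinset]
        rintro ⟨⟨h1, -⟩, -⟩
        exact hmem h1
      rw [if_neg hmem, hT, Finset.erase_eq_of_notMem hωnot, zero_add]
  -- the target as a combination of vanishing pieces
  have hkey : ∀ᶠ n : ℕ in atTop,
      (A n - ∑ ω' ∈ Fs, H ω' n * q ω' n) / H ω n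
        - (if ω ∈ OmegaSet S d then q ω n else 0)
      = ((A n - ∑ ω' ∈ F₂, H ω' n * q ω' n) / H ω₂ n) * (H ω₂ n / H ω n)
        + ∑ ω' ∈ T, (H ω' n / H ω n) * q ω' n := by
    filter_upwards [eventually_ge_atTop 3] with n hn
    have hω0 := hHne ω n hn
    have hω20 := hHne ω₂ n hn
    have hTsum : ∑ ω' ∈ T, H ω' n / H ω n * q ω' n
        = (∑ ω' ∈ T, H ω' n * q ω' n) / H ω n := by
      rw [Finset.sum_div]
      exact Finset.sum_congr rfl fun ω' _ => by ring
    rw [hsplit n, hTsum]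
    by_cases hmem : ω ∈ OmegaSet S d
    · rw [if_pos hmem, if_pos hmem]
      field_simp
      ring
    · rw [if_neg hmem, if_neg hmem]
      field_simp
      ring
  -- limits
  have hratio : ∀ᶠ n : ℕ in atTop, ‖H ω₂ n / H ω n‖ ≤ 1 := by
    rcases hle with hlt | rfl
    · have := (ratioC_tendsto hlt).norm
      simp only [norm_zero] at this
      filter_upwards [this.eventually (eventually_le_nhds one_pos)] with n hn
      exact hn
    · filter_upwards [eventually_ge_atTop 3] with n hn
      rw [div_self (hHne ω n hn), norm_one]
  have hterm1 : Tendsto (fun n =>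
      ((A n - ∑ ω' ∈ F₂, H ω' n * q ω' n) / H ω₂ n) * (H ω₂ n / H ω n)) atTop (𝓝 0) :=
    tendsto_mul_bdd E₂ hratio
  have hterm2 : Tendsto (fun n => ∑ ω' ∈ T, (H ω' n / H ω n) * q ω' n) atTop (𝓝 0) := by
    have : Tendsto (fun n => ∑ ω' ∈ T, (H ω' n / H ω n) * q ω' n) atTop
        (𝓝 (∑ _ω' ∈ T, 0)) := by
      refine tendsto_finset_sum _ fun ω' hω' => ?_
      have hω'lt : NilssonLt ω ω' := by
        rw [hT, Finset.mem_erase, Finset.mem_sdiff, hF₂, hFs, Set.Finite.mem_toFinset,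
          Set.Finite.mem_toFinset] at hω'
        obtain ⟨hne, ⟨hΩ', -⟩, hnotlt⟩ := hω'
        rcases nlt_total ω' ω with hlt | heq | hgt
        · exact absurd ⟨hΩ', hlt⟩ hnotlt
        · exact absurd heq hne
        · exact hgt
      exact tendsto_mul_bdd (ratioC_tendsto hω'lt)
        (Eventually.of_forall fun n => qbound Λ r hr hΛ (c ω') n)
    simpa using this
  have h := (hterm1.add hterm2).congr' (Filter.EventuallyEq.symm hkey)
  rw [add_zero] at h
  exact h

lemma headEst (a : ℕ → ℂ) (S : Finset ℚ) (d : ℕ) (Λ : Finset ℂ) (r : ℝ)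
    (c : ℚ × ℕ → ℂ → ℂ) (hr : 0 < r) (hΛ : ∀ l ∈ Λ, ‖l‖ = r) (hS : S.Nonempty)
    (htd : ∀ ω ∈ OmegaSet S d, Tendsto
      (fun n : ℕ =>
        (a n * (r : ℂ) ^ (-(n : ℤ)) -
          ∑ᶠ ω' ∈ {ω' | ω' ∈ OmegaSet S d ∧ NilssonLe ω' ω},
            ((nilssonMonomial ω' n : ℝ) : ℂ) * ∑ l ∈ Λ, c ω' l * (l / (r : ℂ)) ^ n)
        / ((nilssonMonomial ω n : ℝ) : ℂ)) atTop (𝓝 0)) :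
    Tendsto (fun n : ℕ =>
      (a n * (r : ℂ) ^ (-(n : ℤ))) / ((nilssonMonomial (S.min' hS, d) n : ℝ) : ℂ)
        - ∑ l ∈ Λ, c (S.min' hS, d) l * (l / (r : ℂ)) ^ n) atTop (𝓝 0) := by
  classical
  have h := tailEst a S d Λ r c hr hΛ hS htd (S.min' hS, d)
  have hFs : (lowerStrict_finite S d (S.min' hS, d)).toFinset = ∅ :=
    Set.Finite.toFinset_eq_empty.mpr (min_lowerStrict S d hS)
  simp only [hFs, Finset.sum_empty, sub_zero, if_pos (min_mem S d hS)] at h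
  exact h

set_option maxHeartbeats 1000000 in
lemma radius_contr (a : ℕ → ℂ) (S S' : Finset ℚ) (d d' : ℕ) (Λ Λ' : Finset ℂ)
    (r r' : ℝ) (c c' : ℚ × ℕ → ℂ → ℂ)
    (hr : 0 < r) (hr' : 0 < r')
    (hΛ : ∀ l ∈ Λ, ‖l‖ = r) (hΛ' : ∀ l ∈ Λ', ‖l‖ = r')
    (h1 : IsNilssonExpansion a (OmegaSet S d) Λ r c)
    (h2 : IsNilssonExpansion a (OmegaSet S' d') Λ' r' c')
    (hmin2b : ∀ ω ∈ OmegaSet S' d', ∃ l ∈ Λ', c' ω l ≠ 0)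
    (hlt : r < r') : False := by
  classical
  obtain ⟨ωe, hωe, -⟩ := h1.2
  obtain ⟨s0, hs0, -⟩ := hωe.1
  have hS : S.Nonempty := ⟨s0, hs0⟩
  obtain ⟨ωe', hωe', -⟩ := h2.2
  obtain ⟨s0', hs0', -⟩ := hωe'.1
  have hS' : S'.Nonempty := ⟨s0', hs0'⟩
  set ω₀ : ℚ × ℕ := (S.min' hS, d) with hω₀
  set ω₀' : ℚ × ℕ := (S'.min' hS', d') with hω₀'
  have E1 := headEst a S d Λ r c hr hΛ hS h1.1
  have E2 := headEst a S' d' Λ' r' c' hr' hΛ' hS' h2.1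
  set C₀ : ℝ := ∑ l ∈ Λ, ‖c ω₀ l‖ with hC₀
  -- bound on ‖a n * r^{-n}‖
  have hA1 : ∀ᶠ n : ℕ in atTop,
      ‖a n * (r : ℂ) ^ (-(n : ℤ))‖ ≤ (C₀ + 1) * |nilssonMonomial ω₀ n| := by
    have hev := E1.norm.eventually (eventually_le_nhds (show ‖(0:ℂ)‖ < 1 by norm_num))
    filter_upwards [hev, eventually_ge_atTop 3] with n h1n h3n
    have hH0 : ((nilssonMonomial ω₀ n : ℝ) : ℂ) ≠ 0 := by
      simp only [ne_eq, Complex.ofReal_eq_zero]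
      exact (monomial_pos ω₀ h3n).ne'
    have hid : a n * (r : ℂ) ^ (-(n : ℤ))
        = ((a n * (r : ℂ) ^ (-(n : ℤ))) / ((nilssonMonomial ω₀ n : ℝ) : ℂ)
            - ∑ l ∈ Λ, c ω₀ l * (l / (r : ℂ)) ^ n
          + ∑ l ∈ Λ, c ω₀ l * (l / (r : ℂ)) ^ n) * ((nilssonMonomial ω₀ n : ℝ) : ℂ) := by
      rw [sub_add_cancel, div_mul_cancel₀ _ hH0]
    rw [hid, norm_mul]
    have hn1 : ‖(a n * (r : ℂ) ^ (-(n : ℤ))) / ((nilssonMonomial ω₀ n : ℝ) : ℂ)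
        - ∑ l ∈ Λ, c ω₀ l * (l / (r : ℂ)) ^ n
        + ∑ l ∈ Λ, c ω₀ l * (l / (r : ℂ)) ^ n‖ ≤ 1 + C₀ := by
      refine (norm_add_le _ _).trans (add_le_add h1n (qbound Λ r hr hΛ (c ω₀) n))
    rw [Complex.norm_real, Real.norm_eq_abs]
    calc _ ≤ (1 + C₀) * |nilssonMonomial ω₀ n| :=
            mul_le_mul_of_nonneg_right hn1 (abs_nonneg _)
      _ = (C₀ + 1) * |nilssonMonomial ω₀ n| := by ring
  obtain ⟨K₁, hK₁⟩ := monomial_bound ω₀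
  obtain ⟨K₂, hK₂⟩ := monomial_bound ω₀'
  have hρ0 : (0:ℝ) ≤ r / r' := div_nonneg hr.le hr'.le
  have hρ1 : r / r' < 1 := (div_lt_one hr').mpr hlt
  -- the second normalized sequence tends to 0
  have hA'small : Tendsto (fun n : ℕ =>
      (a n * (r' : ℂ) ^ (-(n : ℤ))) / ((nilssonMonomial ω₀' n : ℝ) : ℂ)) atTop (𝓝 0) := by
    have hRHS : Tendsto (fun n : ℕ => (C₀ + 1) * ((r / r') ^ n * (n:ℝ) ^ (K₁ + K₂)))
        atTop (𝓝 0) := by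
      simpa using (exp_poly (K₁ + K₂) hρ0 hρ1).const_mul (C₀ + 1)
    refine squeeze_zero_norm' ?_ hRHS
    filter_upwards [hA1, hK₁, hK₂, eventually_ge_atTop 3] with n hA1n hK₁n hK₂n h3n
    have hnR : (0:ℝ) < n := by positivity
    have hzpow : (r' : ℝ) ^ (-(n : ℤ)) = r ^ (-(n : ℤ)) * (r / r') ^ n := by
      rw [zpow_neg, zpow_neg, zpow_natCast, zpow_natCast, div_pow]
      field_simp
    have hnorm' : ‖a n * (r' : ℂ) ^ (-(n : ℤ))‖
        = ‖a n * (r : ℂ) ^ (-(n : ℤ))‖ * (r / r') ^ n := by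
      rw [norm_mul, norm_mul, norm_zpow, norm_zpow, Complex.norm_real, Complex.norm_real,
        Real.norm_of_nonneg hr.le, Real.norm_of_nonneg hr'.le, hzpow, mul_assoc]
    rw [norm_div, hnorm']
    have hHinv : ‖((nilssonMonomial ω₀' n : ℝ) : ℂ)‖⁻¹ ≤ (n:ℝ) ^ K₂ := by
      rw [Complex.norm_real, Real.norm_eq_abs, ← abs_inv]
      exact hK₂n.2
    have hHpos : (0:ℝ) ≤ ‖((nilssonMonomial ω₀' n : ℝ) : ℂ)‖⁻¹ := by positivity
    calc ‖a n * (r : ℂ) ^ (-(n : ℤ))‖ * (r / r') ^ n / ‖((nilssonMonomial ω₀' n : ℝ) : ℂ)‖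
        = (‖a n * (r : ℂ) ^ (-(n : ℤ))‖ * (r / r') ^ n)
            * ‖((nilssonMonomial ω₀' n : ℝ) : ℂ)‖⁻¹ := by rw [div_eq_mul_inv]
      _ ≤ ((C₀ + 1) * |nilssonMonomial ω₀ n| * (r / r') ^ n) * (n:ℝ) ^ K₂ := by
          refine mul_le_mul ?_ hHinv hHpos ?_
          · exact mul_le_mul_of_nonneg_right hA1n (pow_nonneg hρ0 n)
          · positivity
      _ ≤ ((C₀ + 1) * (n:ℝ) ^ K₁ * (r / r') ^ n) * (n:ℝ) ^ K₂ := by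
          have hc1 : (0:ℝ) ≤ C₀ + 1 := by positivity
          refine mul_le_mul_of_nonneg_right
            (mul_le_mul_of_nonneg_right
              (mul_le_mul_of_nonneg_left hK₁n.1 hc1) (pow_nonneg hρ0 n)) (by positivity)
      _ = (C₀ + 1) * ((r / r') ^ n * (n:ℝ) ^ (K₁ + K₂)) := by
          rw [pow_add]; ring
  -- hence the leading coefficient polynomial of side 2 tends to 0
  have hq'0 : Tendsto (fun n : ℕ => ∑ l ∈ Λ', c' ω₀' l * (l / (r' : ℂ)) ^ n) atTop (𝓝 0) := by
    have := hA'small.sub E2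
    simp only [hω₀', sub_sub_cancel] at this
    simpa using this
  have hzero := trig_zero Λ' r' hr' hΛ' (c' ω₀') hq'0
  obtain ⟨l, hl, hne⟩ := hmin2b ω₀' (min_mem S' d' hS')
  exact hne (hzero l hl)

lemma rank_lt (T : Finset ℚ) (hT : T.Nonempty) (N : ℕ) (hN : 0 < N)
    (hden : ∀ s ∈ T, ∃ k : ℤ, (s:ℚ) * N = k) (D : ℕ)
    {ω ω' : ℚ × ℕ}
    (hω : (∃ s ∈ T, ∃ m : ℕ, ω.1 = s + m) ∧ ω.2 ≤ D)
    (hω' : (∃ s ∈ T, ∃ m : ℕ, ω'.1 = s + m) ∧ ω'.2 ≤ D)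
    (hlt : NilssonLt ω ω') :
    (((ω.1 - T.min' hT) * N).num).toNat * (D+1) + (D - ω.2)
      < (((ω'.1 - T.min' hT) * N).num).toNat * (D+1) + (D - ω'.2) := by
  set μ := T.min' hT with hμ
  obtain ⟨kμ, hkμ⟩ := hden μ (T.min'_mem hT)
  obtain ⟨⟨s, hs, m, hm⟩, hβ⟩ := hω
  obtain ⟨⟨s', hs', m', hm'⟩, hβ'⟩ := hω'
  obtain ⟨ks, hks⟩ := hden s hs
  obtain ⟨ks', hks'⟩ := hden s' hs'
  set K : ℤ := ks + m * N - kμ with hK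
  set K' : ℤ := ks' + m' * N - kμ with hK'
  have hKQ : (ω.1 - μ) * N = (K : ℚ) := by
    rw [hm, hK]; push_cast; linear_combination hks - hkμ
  have hKQ' : (ω'.1 - μ) * N = (K' : ℚ) := by
    rw [hm', hK']; push_cast; linear_combination hks' - hkμ
  have hμle : ∀ x : ℚ, (∃ t ∈ T, ∃ j : ℕ, x = t + j) → μ ≤ x := by
    rintro x ⟨t, ht, j, rfl⟩
    have h1 : μ ≤ t := T.min'_le t ht
    have h2 : (0:ℚ) ≤ j := by positivity
    linarith
  have hK0 : 0 ≤ K := by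
    have h1 : (0:ℚ) ≤ (ω.1 - μ) * N :=
      mul_nonneg (by linarith [hμle ω.1 ⟨s, hs, m, hm⟩]) (by positivity)
    rw [hKQ] at h1; exact_mod_cast h1
  have hK0' : 0 ≤ K' := by
    have h1 : (0:ℚ) ≤ (ω'.1 - μ) * N :=
      mul_nonneg (by linarith [hμle ω'.1 ⟨s', hs', m', hm'⟩]) (by positivity)
    rw [hKQ'] at h1; exact_mod_cast h1
  rw [hKQ, hKQ', Rat.num_intCast, Rat.num_intCast]
  rcases hlt with h | ⟨heq, h2⟩
  · have hKK : K < K' := by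
      have h1 : (ω.1 - μ) * N < (ω'.1 - μ) * N := by
        have hNpos : (0:ℚ) < N := by positivity
        exact mul_lt_mul_of_pos_right (by linarith) hNpos
      rw [hKQ, hKQ'] at h1; exact_mod_cast h1
    have hKn : K.toNat < K'.toNat := by omega
    have hbd : D - ω.2 ≤ D := Nat.sub_le _ _
    have hbd' : D - ω'.2 ≤ D := Nat.sub_le _ _
    calc K.toNat * (D+1) + (D - ω.2) < K.toNat * (D+1) + (D+1) := by omega
      _ = (K.toNat + 1) * (D+1) := by ring
      _ ≤ K'.toNat * (D+1) := Nat.mul_le_mul_right _ (by omega)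
      _ ≤ K'.toNat * (D+1) + (D - ω'.2) := Nat.le_add_right _ _
  · have hKK : K = K' := by
      have h1 : (ω.1 - μ) * N = (ω'.1 - μ) * N := by rw [heq]
      rw [hKQ, hKQ'] at h1; exact_mod_cast h1
    rw [hKK]
    have : D - ω'.2 > D - ω.2 := by omega
    omega


theorem stmt_7 (a : ℕ → ℂ) (S S' : Finset ℚ) (d d' : ℕ) (Λ Λ' : Finset ℂ)
    (r r' : ℝ) (hr : 0 < r) (hr' : 0 < r')
    (hΛ : ∀ l ∈ Λ, ‖l‖ = r) (hΛ' : ∀ l ∈ Λ', ‖l‖ = r')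
    (c c' : ℚ × ℕ → ℂ → ℂ)
    (h1 : IsNilssonExpansion a (OmegaSet S d) Λ r c)
    (h2 : IsNilssonExpansion a (OmegaSet S' d') Λ' r' c')
    (hmin1a : ∀ l ∈ Λ, ∃ ω ∈ OmegaSet S d, c ω l ≠ 0)
    (hmin1b : ∀ ω ∈ OmegaSet S d, ∃ l ∈ Λ, c ω l ≠ 0)
    (hmin2a : ∀ l ∈ Λ', ∃ ω ∈ OmegaSet S' d', c' ω l ≠ 0)
    (hmin2b : ∀ ω ∈ OmegaSet S' d', ∃ l ∈ Λ', c' ω l ≠ 0) :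
    OmegaSet S d = OmegaSet S' d' ∧ Λ = Λ' ∧
      ∀ ω ∈ OmegaSet S d, ∀ l ∈ Λ, c ω l = c' ω l := by
  classical
  have hΛn : ∀ l ∈ Λ, ‖l‖ = r := fun l hl => by
    exact hΛ l hl
  have hΛn' : ∀ l ∈ Λ', ‖l‖ = r' := fun l hl => by
    exact hΛ' l hl
  -- radii agree
  have hrr : r = r' := by
    rcases lt_trichotomy r r' with h | h | h
    · exact (radius_contr a S S' d d' Λ Λ' r r' c c' hr hr' hΛn hΛn' h1 h2 hmin2b h).elim
    · exact h
    · exact (radius_contr a S' S d' d Λ' Λ r' r c' c hr' hr hΛn' hΛn h2 h1 hmin1b h).elim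
  subst hrr
  -- nonemptiness
  obtain ⟨ωe, hωe, -⟩ := h1.2
  obtain ⟨s0, hs0, -⟩ := hωe.1
  have hS : S.Nonempty := ⟨s0, hs0⟩
  obtain ⟨ωe', hωe', -⟩ := h2.2
  obtain ⟨s0', hs0', -⟩ := hωe'.1
  have hS' : S'.Nonempty := ⟨s0', hs0'⟩
  -- common denominator / rank setup
  set T : Finset ℚ := S ∪ S' with hTdef
  have hT : T.Nonempty := ⟨s0, Finset.mem_union_left _ hs0⟩
  obtain ⟨N, hN, hden⟩ := exists_common_den T
  set D : ℕ := max d d' with hDdef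
  set φ : ℚ × ℕ → ℕ :=
    fun ω => (((ω.1 - T.min' hT) * N).num).toNat * (D+1) + (D - ω.2) with hφ
  have hmemT : ∀ ω : ℚ × ℕ, ω ∈ OmegaSet S d ∪ OmegaSet S' d' →
      (∃ s ∈ T, ∃ m : ℕ, ω.1 = s + m) ∧ ω.2 ≤ D := by
    rintro ω (⟨⟨s, hs, m, hm⟩, hβ⟩ | ⟨⟨s, hs, m, hm⟩, hβ⟩)
    · exact ⟨⟨s, Finset.mem_union_left _ hs, m, hm⟩, le_trans hβ (le_max_left _ _)⟩
    · exact ⟨⟨s, Finset.mem_union_right _ hs, m, hm⟩, le_trans hβ (le_max_right _ _)⟩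
  -- extended coefficient functions
  set C : ℚ × ℕ → ℂ → ℂ :=
    fun ω l => if ω ∈ OmegaSet S d ∧ l ∈ Λ then c ω l else 0 with hC
  set C' : ℚ × ℕ → ℂ → ℂ :=
    fun ω l => if ω ∈ OmegaSet S' d' ∧ l ∈ Λ' then c' ω l else 0 with hC'
  have hCpos : ∀ (p : ℚ × ℕ) (lx : ℂ), p ∈ OmegaSet S d → lx ∈ Λ → C p lx = c p lx := by
    intro p lx hp hl
    simp only [hC]
    rw [if_pos (⟨hp, hl⟩ : p ∈ OmegaSet S d ∧ lx ∈ Λ)]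
  have hCzero : ∀ (p : ℚ × ℕ) (lx : ℂ), ¬(p ∈ OmegaSet S d ∧ lx ∈ Λ) → C p lx = 0 := by
    intro p lx hn
    simp only [hC]
    rw [if_neg hn]
  have hC'pos : ∀ (p : ℚ × ℕ) (lx : ℂ), p ∈ OmegaSet S' d' → lx ∈ Λ' → C' p lx = c' p lx := by
    intro p lx hp hl
    simp only [hC']
    rw [if_pos (⟨hp, hl⟩ : p ∈ OmegaSet S' d' ∧ lx ∈ Λ')]
  have hC'zero : ∀ (p : ℚ × ℕ) (lx : ℂ), ¬(p ∈ OmegaSet S' d' ∧ lx ∈ Λ') → C' p lx = 0 := by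
    intro p lx hn
    simp only [hC']
    rw [if_neg hn]
  have hΛnu : ∀ l ∈ Λ ∪ Λ', ‖l‖ = r := by
    intro l hl
    rcases Finset.mem_union.mp hl with hl | hl
    exacts [hΛn l hl, hΛn' l hl]
  -- rewriting the coefficient polynomials through C
  have hCq : ∀ p ∈ OmegaSet S d, ∀ n : ℕ,
      (∑ l ∈ Λ, c p l * (l / (r:ℂ)) ^ n) = ∑ l ∈ Λ ∪ Λ', C p l * (l / (r:ℂ)) ^ n := by
    intro p hp n
    rw [← Finset.sum_subset Finset.subset_union_left
      (fun x _ hx => by rw [hCzero p x (fun hc => hx hc.2), zero_mul])]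
    exact Finset.sum_congr rfl fun l hl => by rw [hCpos p l hp hl]
  have hCq' : ∀ p ∈ OmegaSet S' d', ∀ n : ℕ,
      (∑ l ∈ Λ', c' p l * (l / (r:ℂ)) ^ n) = ∑ l ∈ Λ ∪ Λ', C' p l * (l / (r:ℂ)) ^ n := by
    intro p hp n
    rw [← Finset.sum_subset Finset.subset_union_right
      (fun x _ hx => by rw [hC'zero p x (fun hc => hx hc.2), zero_mul])]
    exact Finset.sum_congr rfl fun l hl => by rw [hC'pos p l hp hl]
  -- the main inductive claim
  have key : ∀ n : ℕ, ∀ ω : ℚ × ℕ, ω ∈ OmegaSet S d ∪ OmegaSet S' d' → φ ω < n →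
      ((ω ∈ OmegaSet S d ↔ ω ∈ OmegaSet S' d') ∧ ∀ l : ℂ, C ω l = C' ω l) := by
    intro n
    induction n with
    | zero => intro ω hω h; omega
    | succ n ih =>
      intro ω hω hφω
      have IH : ∀ ω' : ℚ × ℕ, ω' ∈ OmegaSet S d ∪ OmegaSet S' d' → NilssonLt ω' ω →
          ((ω' ∈ OmegaSet S d ↔ ω' ∈ OmegaSet S' d') ∧ ∀ l : ℂ, C ω' l = C' ω' l) := by
        intro ω' hω' hlt
        refine ih ω' hω' ?_
        have h₁ := rank_lt T hT N hN hden D (hmemT ω' hω') (hmemT ω hω) hlt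
        have h₂ : φ ω' < φ ω := by simp only [hφ]; exact h₁
        omega
      -- lower sets agree
      have hFeq : (lowerStrict_finite S' d' ω).toFinset
          = (lowerStrict_finite S d ω).toFinset := by
        ext p
        rw [Set.Finite.mem_toFinset, Set.Finite.mem_toFinset]
        constructor
        · rintro ⟨hp, hlt⟩
          exact ⟨(IH p (Or.inr hp) hlt).1.mpr hp, hlt⟩
        · rintro ⟨hp, hlt⟩
          exact ⟨(IH p (Or.inl hp) hlt).1.mp hp, hlt⟩
      -- the two tail estimates
      have E1 := tailEst a S d Λ r c hr hΛn hS h1.1 ω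
      have E2 := tailEst a S' d' Λ' r c' hr hΛn' hS' h2.1 ω
      -- rewrite E2's sum to match E1's
      have hsum : ∀ n : ℕ,
          (∑ ω' ∈ (lowerStrict_finite S' d' ω).toFinset,
            ((nilssonMonomial ω' n : ℝ) : ℂ) * ∑ l ∈ Λ', c' ω' l * (l / (r:ℂ)) ^ n)
          = ∑ ω' ∈ (lowerStrict_finite S d ω).toFinset,
            ((nilssonMonomial ω' n : ℝ) : ℂ) * ∑ l ∈ Λ, c ω' l * (l / (r:ℂ)) ^ n := by
        intro n
        refine Finset.sum_congr hFeq fun p hp => ?_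
        rw [Set.Finite.mem_toFinset] at hp
        obtain ⟨hpΩ, hplt⟩ := hp
        have hpΩ' : p ∈ OmegaSet S' d' := (IH p (Or.inl hpΩ) hplt).1.mp hpΩ
        have hCeq := (IH p (Or.inl hpΩ) hplt).2
        congr 1
        rw [hCq p hpΩ n, hCq' p hpΩ' n]
        exact (Finset.sum_congr rfl fun l _ => by rw [hCeq l]).symm
      have E2' : Tendsto (fun n : ℕ =>
          (a n * (r : ℂ) ^ (-(n : ℤ)) -
            ∑ ω' ∈ (lowerStrict_finite S d ω).toFinset,
              ((nilssonMonomial ω' n : ℝ) : ℂ) * ∑ l ∈ Λ, c ω' l * (l / (r : ℂ)) ^ n)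
          / ((nilssonMonomial ω n : ℝ) : ℂ)
          - (if ω ∈ OmegaSet S' d' then ∑ l ∈ Λ', c' ω l * (l / (r : ℂ)) ^ n else 0))
          atTop (𝓝 0) := by
        refine E2.congr fun n => ?_
        rw [hsum n]
      -- difference of the head coefficient polynomials tends to 0
      have hdiff : Tendsto (fun n : ℕ =>
          ((a n * (r : ℂ) ^ (-(n : ℤ)) -
            ∑ ω' ∈ (lowerStrict_finite S d ω).toFinset,
              ((nilssonMonomial ω' n : ℝ) : ℂ) * ∑ l ∈ Λ, c ω' l * (l / (r : ℂ)) ^ n)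
          / ((nilssonMonomial ω n : ℝ) : ℂ)
          - (if ω ∈ OmegaSet S d then ∑ l ∈ Λ, c ω l * (l / (r : ℂ)) ^ n else 0))
          - ((a n * (r : ℂ) ^ (-(n : ℤ)) -
            ∑ ω' ∈ (lowerStrict_finite S d ω).toFinset,
              ((nilssonMonomial ω' n : ℝ) : ℂ) * ∑ l ∈ Λ, c ω' l * (l / (r : ℂ)) ^ n)
          / ((nilssonMonomial ω n : ℝ) : ℂ)
          - (if ω ∈ OmegaSet S' d' then ∑ l ∈ Λ', c' ω l * (l / (r : ℂ)) ^ n else 0)))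
          atTop (𝓝 0) := by
        simpa using E1.sub E2'
      have hgtd : Tendsto (fun n : ℕ =>
          ∑ l ∈ Λ ∪ Λ', (C' ω l - C ω l) * (l / (r:ℂ)) ^ n) atTop (𝓝 0) := by
        refine hdiff.congr fun n => ?_
        have hit1 : (if ω ∈ OmegaSet S d then ∑ l ∈ Λ, c ω l * (l / (r:ℂ)) ^ n else 0)
            = ∑ l ∈ Λ ∪ Λ', C ω l * (l / (r:ℂ)) ^ n := by
          by_cases hmem : ω ∈ OmegaSet S d
          · rw [if_pos hmem, hCq ω hmem n]
          · rw [if_neg hmem]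
            exact (Finset.sum_eq_zero fun l _ => by
              rw [hCzero ω l (fun hc => hmem hc.1), zero_mul]).symm
        have hit2 : (if ω ∈ OmegaSet S' d' then ∑ l ∈ Λ', c' ω l * (l / (r:ℂ)) ^ n else 0)
            = ∑ l ∈ Λ ∪ Λ', C' ω l * (l / (r:ℂ)) ^ n := by
          by_cases hmem : ω ∈ OmegaSet S' d'
          · rw [if_pos hmem, hCq' ω hmem n]
          · rw [if_neg hmem]
            exact (Finset.sum_eq_zero fun l _ => by
              rw [hC'zero ω l (fun hc => hmem hc.1), zero_mul]).symm
        have hsplit : ∑ l ∈ Λ ∪ Λ', (C' ω l - C ω l) * (l / (r:ℂ)) ^ n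
            = (∑ l ∈ Λ ∪ Λ', C' ω l * (l / (r:ℂ)) ^ n)
              - ∑ l ∈ Λ ∪ Λ', C ω l * (l / (r:ℂ)) ^ n := by
          rw [← Finset.sum_sub_distrib]
          exact Finset.sum_congr rfl fun l _ => sub_mul _ _ _
        rw [hit1, hit2, hsplit]
        ring
      have hcoef := trig_zero (Λ ∪ Λ') r hr hΛnu (fun l => C' ω l - C ω l) hgtd
      have hCeqω : ∀ l : ℂ, C ω l = C' ω l := by
        intro l
        by_cases hl : l ∈ Λ ∪ Λ'
        · have h0 := hcoef l hl
          simp only [sub_eq_zero] at h0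
          exact h0.symm
        · rw [hCzero ω l (fun hc => hl (Finset.mem_union_left _ hc.2)),
            hC'zero ω l (fun hc => hl (Finset.mem_union_right _ hc.2))]
      refine ⟨⟨fun hmem => ?_, fun hmem => ?_⟩, hCeqω⟩
      · obtain ⟨l, hl, hne⟩ := hmin1b ω hmem
        have hx : C' ω l ≠ 0 := by
          rw [← hCeqω l, hCpos ω l hmem hl]; exact hne
        by_contra hmem'
        exact hx (hC'zero ω l (fun hc => hmem' hc.1))
      · obtain ⟨l, hl, hne⟩ := hmin2b ω hmem
        have hx : C ω l ≠ 0 := by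
          rw [hCeqω l, hC'pos ω l hmem hl]; exact hne
        by_contra hmem'
        exact hx (hCzero ω l (fun hc => hmem' hc.1))
  have keyAll : ∀ ω : ℚ × ℕ, ω ∈ OmegaSet S d ∪ OmegaSet S' d' →
      ((ω ∈ OmegaSet S d ↔ ω ∈ OmegaSet S' d') ∧ ∀ l : ℂ, C ω l = C' ω l) :=
    fun ω hω => key (φ ω + 1) ω hω (Nat.lt_succ_self _)
  -- conclusions
  have hΩeq : OmegaSet S d = OmegaSet S' d' := by
    ext p
    constructor
    · intro hp; exact (keyAll p (Or.inl hp)).1.mp hp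
    · intro hp; exact (keyAll p (Or.inr hp)).1.mpr hp
  have hΛeq : Λ = Λ' := by
    ext l
    constructor
    · intro hl
      obtain ⟨ω, hω, hne⟩ := hmin1a l hl
      have hx : C' ω l ≠ 0 := by
        rw [← (keyAll ω (Or.inl hω)).2 l, hCpos ω l hω hl]; exact hne
      by_contra hl'
      exact hx (hC'zero ω l (fun hc => hl' hc.2))
    · intro hl
      obtain ⟨ω, hω, hne⟩ := hmin2a l hl
      have hx : C ω l ≠ 0 := by
        rw [(keyAll ω (Or.inr hω)).2 l, hC'pos ω l hω hl]; exact hne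
      by_contra hl'
      exact hx (hCzero ω l (fun hc => hl' hc.2))
  refine ⟨hΩeq, hΛeq, fun ω hω l hl => ?_⟩
  have h := (keyAll ω (Or.inl hω)).2 l
  rw [hCpos ω l hω hl, hC'pos ω l (hΩeq ▸ hω) (hΛeq ▸ hl)] at h
  exact h
end

section
/- Let f : (0, ∞) → ℂ be measurable with |f(t)| ≤ C e^{σt} for some constants C, σ, and suppose f(t) = Σ_{k=0}^{K} b_k t^{γ+k−1} + O(t^{γ+K}) as t → 0⁺, where γ > 0. Then for n → ∞, ∫₀^∞ e^{−nt} f(t) dt = Σ_{k=0}^{K} b_k Γ(γ+k) n^{−γ−k} + O(n^{−γ−K−1}). -/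
open MeasureTheory Real Set Filter

-- helper 1: integrability
lemma watson_intOn {a r : ℝ} (ha : 0 < a) (hr : 0 < r) :
    IntegrableOn (fun t : ℝ => t ^ (a - 1) * Real.exp (-(r * t))) (Set.Ioi 0) := by
  have h := integrableOn_rpow_mul_exp_neg_mul_rpow (s := a - 1) (p := 1) (b := r)
    (by linarith) zero_lt_one hr
  refine h.congr_fun (fun t ht => ?_) measurableSet_Ioi
  beta_reduce
  rw [Real.rpow_one, neg_mul]

-- helper 2: Gamma identity
lemma watson_gamma {a r : ℝ} (ha : 0 < a) (hr : 0 < r) :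
    ∫ t in Set.Ioi (0:ℝ), Complex.exp (-(r:ℂ) * t) * ((t ^ (a-1) : ℝ) : ℂ)
      = ((Real.Gamma a * r ^ (-a) : ℝ) : ℂ) := by
  have h1 : ∀ t : ℝ, Complex.exp (-(r:ℂ) * t) * ((t ^ (a-1) : ℝ) : ℂ)
      = ((t ^ (a-1) * Real.exp (-(r * t)) : ℝ) : ℂ) := by
    intro t
    rw [show -(r:ℂ)*t = ((-(r*t):ℝ):ℂ) by push_cast; ring, ← Complex.ofReal_exp,
      ← Complex.ofReal_mul, mul_comm]
  simp_rw [h1]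
  have h2 : Real.Gamma a * r ^ (-a) = ∫ t in Set.Ioi (0:ℝ), t^(a-1)*Real.exp (-(r*t)) := by
    rw [Real.integral_rpow_mul_exp_neg_mul_Ioi ha hr, Real.rpow_neg hr.le, one_div,
      Real.inv_rpow hr.le]
    ring
  rw [h2]
  exact integral_ofReal

set_option maxHeartbeats 2000000 in
theorem stmt_17 (f : ℝ → ℂ) (hf : Measurable f) (C σ : ℝ)
    (hbound : ∀ t ∈ Set.Ioi (0 : ℝ), ‖f t‖ ≤ C * Real.exp (σ * t))
    (γ : ℝ) (hγ : 0 < γ) (K : ℕ) (b : ℕ → ℂ)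
    (hexp : (fun t : ℝ => f t - ∑ k ∈ Finset.range (K + 1),
        b k * ((t ^ (γ + k - 1) : ℝ) : ℂ))
      =O[nhdsWithin 0 (Set.Ioi 0)] fun t : ℝ => t ^ (γ + K)) :
    (fun n : ℕ =>
        (∫ t in Set.Ioi (0 : ℝ), Complex.exp (-(n : ℂ) * t) * f t) -
          ∑ k ∈ Finset.range (K + 1),
            b k * ((Real.Gamma (γ + k) * (n : ℝ) ^ (-(γ + k)) : ℝ) : ℂ))
      =O[Filter.atTop] fun n : ℕ => (n : ℝ) ^ (-(γ + K + 1)) := by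
  classical
  set g : ℝ → ℂ := fun t => f t - ∑ k ∈ Finset.range (K + 1),
      b k * ((t ^ (γ + k - 1) : ℝ) : ℂ) with hgdef
  -- constant C is nonnegative
  have hC : 0 ≤ C := by
    have h1 := (norm_nonneg (f 1)).trans (hbound 1 (by norm_num))
    nlinarith [Real.exp_pos (σ * (1:ℝ))]
  -- extract M, δ from hexp
  obtain ⟨M, hM0, hMev⟩ := hexp.exists_pos
  rw [Asymptotics.isBigOWith_iff] at hMev
  obtain ⟨δ, hδmem, hδsub⟩ := mem_nhdsGT_iff_exists_Ioc_subset.mp hMev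
  have hδ : (0:ℝ) < δ := hδmem
  have hMbd : ∀ t ∈ Set.Ioc (0:ℝ) δ, ‖g t‖ ≤ M * t ^ (γ + K) := by
    intro t ht
    have h := hδsub ht
    simpa [Real.norm_eq_abs, abs_of_nonneg (Real.rpow_nonneg ht.1.le _)] using h
  -- measurability
  have hgm : Measurable g := by
    apply hf.sub
    exact Finset.measurable_sum _ fun k _ =>
      (Complex.measurable_ofReal.comp (by measurability : Measurable fun t : ℝ => t ^ (γ + (k:ℝ) - 1))).const_mul _
  have hem : ∀ n : ℕ, Measurable fun t : ℝ => Complex.exp (-(n:ℂ) * t) := fun n =>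
    Complex.measurable_exp.comp (Complex.measurable_ofReal.const_mul _)
  have hnorme : ∀ (n : ℕ) (t : ℝ), ‖Complex.exp (-(n:ℂ) * t)‖ = Real.exp (-((n:ℝ) * t)) := by
    intro n t
    rw [Complex.norm_exp]
    congr 1
    simp
  -- integrability of f-part
  have hIf : ∀ n : ℕ, σ < (n:ℝ) → IntegrableOn (fun t : ℝ => Complex.exp (-(n:ℂ) * t) * f t) (Set.Ioi 0) := by
    intro n hn
    have hmaj : IntegrableOn (fun t : ℝ => C * Real.exp (-((n:ℝ) - σ) * t)) (Set.Ioi 0) :=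
      (exp_neg_integrableOn_Ioi 0 (by linarith)).const_mul C
    refine Integrable.mono' hmaj (((hem n).mul hf).aestronglyMeasurable) ?_
    rw [ae_restrict_iff' measurableSet_Ioi]
    filter_upwards with t ht
    have ht0 : 0 < t := ht
    have harg : -((n:ℝ)*t) + σ*t = -((n:ℝ)-σ)*t := by ring
    calc ‖Complex.exp (-(n:ℂ) * t) * f t‖
        = Real.exp (-((n:ℝ)*t)) * ‖f t‖ := by
          rw [norm_mul, hnorme]
      _ ≤ Real.exp (-((n:ℝ)*t)) * (C * Real.exp (σ*t)) := by
          exact mul_le_mul_of_nonneg_left (hbound t ht) (Real.exp_pos _).le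
      _ = C * Real.exp (-((n:ℝ)-σ)*t) := by
          rw [mul_left_comm, ← Real.exp_add, harg]
  -- integrability of the power terms
  have hIk : ∀ n : ℕ, 0 < n → ∀ k : ℕ, IntegrableOn
      (fun t : ℝ => Complex.exp (-(n:ℂ) * t) * (b k * ((t ^ (γ + (k:ℝ) - 1) : ℝ) : ℂ)))
      (Set.Ioi 0) := by
    intro n hn k
    have hn' : (0:ℝ) < n := by exact_mod_cast hn
    have hmaj := (watson_intOn (show (0:ℝ) < γ + (k:ℝ) by positivity) hn').const_mul
      (‖b k‖)
    refine Integrable.mono' hmaj (((hem n).mul (measurable_const.mul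
      (Complex.measurable_ofReal.comp
        (by measurability : Measurable fun t : ℝ => t ^ (γ + (k:ℝ) - 1))))).aestronglyMeasurable) ?_
    rw [ae_restrict_iff' measurableSet_Ioi]
    filter_upwards with t ht
    have ht0 : 0 < t := ht
    rw [norm_mul, norm_mul, hnorme, Complex.norm_real, Real.norm_eq_abs, abs_of_nonneg (Real.rpow_nonneg ht0.le _)]
    exact le_of_eq (by ring)
  -- the Gamma-term identity
  have hterm : ∀ n : ℕ, 0 < n → ∀ k : ℕ,
      (∫ t in Set.Ioi (0:ℝ), Complex.exp (-(n:ℂ) * t) * (b k * ((t ^ (γ + (k:ℝ) - 1) : ℝ) : ℂ)))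
        = b k * ((Real.Gamma (γ + (k:ℝ)) * (n:ℝ) ^ (-(γ + (k:ℝ))) : ℝ) : ℂ) := by
    intro n hn k
    have hn' : (0:ℝ) < n := by exact_mod_cast hn
    have h1 : (∫ t in Set.Ioi (0:ℝ), Complex.exp (-(n:ℂ) * t) * (b k * ((t ^ (γ + (k:ℝ) - 1) : ℝ) : ℂ)))
        = ∫ t in Set.Ioi (0:ℝ), b k * (Complex.exp (-(n:ℂ) * t) * ((t ^ (γ + (k:ℝ) - 1) : ℝ) : ℂ)) := by
      apply setIntegral_congr_fun measurableSet_Ioi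
      intro t _
      ring
    rw [h1, integral_const_mul]
    congr 1
    simp_rw [← Complex.ofReal_natCast n]
    exact watson_gamma (show (0:ℝ) < γ + (k:ℝ) by positivity) hn'
  -- integrability of the g-part
  have hIg : ∀ n : ℕ, 0 < n → σ < (n:ℝ) →
      IntegrableOn (fun t : ℝ => Complex.exp (-(n:ℂ) * t) * g t) (Set.Ioi 0) := by
    intro n hn hσ
    have hsum : IntegrableOn (fun t : ℝ => ∑ k ∈ Finset.range (K+1),
        Complex.exp (-(n:ℂ) * t) * (b k * ((t ^ (γ + (k:ℝ) - 1) : ℝ) : ℂ))) (Set.Ioi 0) :=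
      integrable_finset_sum _ fun k _ => hIk n hn k
    refine IntegrableOn.congr_fun ((hIf n hσ).sub hsum) (fun t _ => ?_) measurableSet_Ioi
    simp only [Pi.sub_apply, hgdef, mul_sub, Finset.mul_sum]
  -- the key decomposition
  have hkey : ∀ n : ℕ, 0 < n → σ < (n:ℝ) →
      ((∫ t in Set.Ioi (0:ℝ), Complex.exp (-(n:ℂ) * t) * f t) -
        ∑ k ∈ Finset.range (K+1), b k * ((Real.Gamma (γ + (k:ℝ)) * (n:ℝ) ^ (-(γ + (k:ℝ))) : ℝ) : ℂ))
      = (∫ t in Set.Ioc (0:ℝ) δ, Complex.exp (-(n:ℂ) * t) * g t)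
        + ∫ t in Set.Ioi δ, Complex.exp (-(n:ℂ) * t) * g t := by
    intro n hn hσ
    have hsum : IntegrableOn (fun t : ℝ => ∑ k ∈ Finset.range (K+1),
        Complex.exp (-(n:ℂ) * t) * (b k * ((t ^ (γ + (k:ℝ) - 1) : ℝ) : ℂ))) (Set.Ioi 0) :=
      integrable_finset_sum _ fun k _ => hIk n hn k
    have h2 : ∑ k ∈ Finset.range (K+1), b k * ((Real.Gamma (γ + (k:ℝ)) * (n:ℝ) ^ (-(γ + (k:ℝ))) : ℝ) : ℂ)
        = ∫ t in Set.Ioi (0:ℝ), ∑ k ∈ Finset.range (K+1),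
            Complex.exp (-(n:ℂ) * t) * (b k * ((t ^ (γ + (k:ℝ) - 1) : ℝ) : ℂ)) := by
      rw [integral_finset_sum _ (fun k _ => hIk n hn k)]
      exact Finset.sum_congr rfl fun k _ => (hterm n hn k).symm
    rw [h2, ← integral_sub (hIf n hσ) hsum]
    have h3 : (∫ t in Set.Ioi (0:ℝ), (Complex.exp (-(n:ℂ) * t) * f t -
        ∑ k ∈ Finset.range (K+1), Complex.exp (-(n:ℂ) * t) * (b k * ((t ^ (γ + (k:ℝ) - 1) : ℝ) : ℂ))))
        = ∫ t in Set.Ioi (0:ℝ), Complex.exp (-(n:ℂ) * t) * g t := by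
      refine setIntegral_congr_fun measurableSet_Ioi (fun t _ => ?_)
      simp only [hgdef, mul_sub, Finset.mul_sum]
    rw [h3, ← Set.Ioc_union_Ioi_eq_Ioi hδ.le]
    exact setIntegral_union (Set.Ioc_disjoint_Ioi le_rfl) measurableSet_Ioi
      ((hIg n hn hσ).mono_set Set.Ioc_subset_Ioi_self)
      ((hIg n hn hσ).mono_set (Set.Ioi_subset_Ioi hδ.le))
  -- Bound on the inner piece
  have hB1 : ∀ n : ℕ, 0 < n → ‖∫ t in Set.Ioc (0:ℝ) δ, Complex.exp (-(n:ℂ) * t) * g t‖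
      ≤ M * Real.Gamma (γ + (K:ℝ) + 1) * (n:ℝ) ^ (-(γ + (K:ℝ) + 1)) := by
    intro n hn
    have hn' : (0:ℝ) < n := by exact_mod_cast hn
    have hmajInt : IntegrableOn
        (fun t : ℝ => M * (t ^ (γ + (K:ℝ) + 1 - 1) * Real.exp (-((n:ℝ) * t)))) (Set.Ioi 0) :=
      (watson_intOn (by positivity) hn').const_mul M
    have hle : ‖∫ t in Set.Ioc (0:ℝ) δ, Complex.exp (-(n:ℂ) * t) * g t‖
        ≤ ∫ t in Set.Ioc (0:ℝ) δ, M * (t ^ (γ + (K:ℝ) + 1 - 1) * Real.exp (-((n:ℝ) * t))) := by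
      apply norm_integral_le_of_norm_le (hmajInt.mono_set Set.Ioc_subset_Ioi_self)
      rw [ae_restrict_iff' measurableSet_Ioc]
      filter_upwards with t ht
      have ht0 : 0 < t := ht.1
      have h2 : t ^ (γ + (K:ℝ) + 1 - 1) = t ^ (γ + (K:ℝ)) := by norm_num
      rw [norm_mul, hnorme, h2]
      calc Real.exp (-((n:ℝ) * t)) * ‖g t‖
          ≤ Real.exp (-((n:ℝ) * t)) * (M * t ^ (γ + (K:ℝ))) :=
            mul_le_mul_of_nonneg_left (hMbd t ht) (Real.exp_pos _).le
        _ = M * (t ^ (γ + (K:ℝ)) * Real.exp (-((n:ℝ) * t))) := by ring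
    have hle2 : (∫ t in Set.Ioc (0:ℝ) δ, M * (t ^ (γ + (K:ℝ) + 1 - 1) * Real.exp (-((n:ℝ) * t))))
        ≤ ∫ t in Set.Ioi (0:ℝ), M * (t ^ (γ + (K:ℝ) + 1 - 1) * Real.exp (-((n:ℝ) * t))) := by
      apply setIntegral_mono_set hmajInt
      · rw [EventuallyLE, ae_restrict_iff' measurableSet_Ioi]
        filter_upwards with t ht
        have ht0 : (0:ℝ) < t := ht
        exact mul_nonneg hM0.le (mul_nonneg (Real.rpow_nonneg ht0.le _) (Real.exp_pos _).le)
      · exact Filter.Eventually.of_forall fun t ht => Set.Ioc_subset_Ioi_self ht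
    have hval : (∫ t in Set.Ioi (0:ℝ), M * (t ^ (γ + (K:ℝ) + 1 - 1) * Real.exp (-((n:ℝ) * t))))
        = M * Real.Gamma (γ + (K:ℝ) + 1) * (n:ℝ) ^ (-(γ + (K:ℝ) + 1)) := by
      rw [integral_const_mul, Real.integral_rpow_mul_exp_neg_mul_Ioi (by positivity) hn',
        one_div, Real.inv_rpow hn'.le, ← Real.rpow_neg hn'.le]
      ring
    linarith [hle, hle2.trans_eq hval]
  -- the majorant on the tail
  set φ : ℝ → ℝ := fun t => C * Real.exp (-t) + ∑ k ∈ Finset.range (K+1),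
      ‖b k‖ * (t ^ (γ + (k:ℝ) - 1) * Real.exp (-t)) with hφdef
  have hφint : IntegrableOn φ (Set.Ioi δ) := by
    apply Integrable.add
    · refine IntegrableOn.congr_fun ((exp_neg_integrableOn_Ioi δ zero_lt_one).const_mul C)
        (fun t _ => ?_) measurableSet_Ioi
      rw [neg_one_mul]
    · apply integrable_finset_sum
      intro k _
      refine IntegrableOn.congr_fun (((watson_intOn (show (0:ℝ) < γ + (k:ℝ) by positivity)
        zero_lt_one).mono_set (Set.Ioi_subset_Ioi hδ.le)).const_mul (‖b k‖))
        (fun t _ => ?_) measurableSet_Ioi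
      rw [one_mul]
  set D : ℝ := ∫ t in Set.Ioi δ, φ t with hDdef
  have hD0 : 0 ≤ D := by
    refine setIntegral_nonneg measurableSet_Ioi fun t ht => ?_
    have ht0 : (0:ℝ) ≤ t := (hδ.trans ht).le
    exact add_nonneg (mul_nonneg hC (Real.exp_pos _).le) (Finset.sum_nonneg fun k _ =>
      mul_nonneg (norm_nonneg _) (mul_nonneg (Real.rpow_nonneg ht0 _) (Real.exp_pos _).le))
  -- Bound on the tail piece
  have hB2 : ∀ n : ℕ, 2 ≤ n → 2*σ + 2 ≤ (n:ℝ) →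
      ‖∫ t in Set.Ioi δ, Complex.exp (-(n:ℂ) * t) * g t‖
        ≤ Real.exp (-((n:ℝ) * δ / 2)) * D := by
    intro n hn2 hnσ
    have hnn : (0:ℝ) ≤ n := by positivity
    have hptwise : ∀ t ∈ Set.Ioi δ, ‖Complex.exp (-(n:ℂ) * t) * g t‖
        ≤ Real.exp (-((n:ℝ) * δ / 2)) * φ t := by
      intro t ht
      have htδ : δ < t := ht
      have ht0 : 0 < t := hδ.trans htδ
      have he1 : Real.exp (-((n:ℝ)*t)) * Real.exp (σ*t)
          ≤ Real.exp (-((n:ℝ)*δ/2)) * Real.exp (-t) := by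
        rw [← Real.exp_add, ← Real.exp_add]
        apply Real.exp_le_exp.mpr
        nlinarith [mul_le_mul_of_nonneg_left htδ.le hnn,
          mul_le_mul_of_nonneg_right (show σ + 1 ≤ (n:ℝ)/2 by linarith) ht0.le]
      have he2 : Real.exp (-((n:ℝ)*t)) ≤ Real.exp (-((n:ℝ)*δ/2)) * Real.exp (-t) := by
        rw [← Real.exp_add]
        apply Real.exp_le_exp.mpr
        have h2 : (2:ℝ) ≤ n := by exact_mod_cast hn2
        nlinarith [mul_le_mul_of_nonneg_left htδ.le hnn,
          mul_le_mul_of_nonneg_right h2 ht0.le]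
      have hgt : g t = f t - ∑ k ∈ Finset.range (K+1), b k * ((t ^ (γ + (k:ℝ) - 1) : ℝ) : ℂ) := rfl
      have hsum : ‖∑ k ∈ Finset.range (K+1), b k * ((t ^ (γ + (k:ℝ) - 1) : ℝ) : ℂ)‖
          ≤ ∑ k ∈ Finset.range (K+1), ‖b k‖ * t ^ (γ + (k:ℝ) - 1) := by
        refine (norm_sum_le _ _).trans (Finset.sum_le_sum fun k _ => ?_)
        rw [norm_mul, Complex.norm_real, Real.norm_eq_abs,
          abs_of_nonneg (Real.rpow_nonneg ht0.le _)]
      have hgnorm : ‖g t‖ ≤ ‖f t‖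
          + ∑ k ∈ Finset.range (K+1), ‖b k‖ * t ^ (γ + (k:ℝ) - 1) := by
        rw [hgt]
        refine (norm_sub_le _ _).trans ?_
        linarith
      rw [norm_mul, hnorme]
      have hf' : Real.exp (-((n:ℝ)*t)) * ‖f t‖
          ≤ Real.exp (-((n:ℝ)*δ/2)) * (C * Real.exp (-t)) := by
        calc Real.exp (-((n:ℝ)*t)) * ‖f t‖
            ≤ Real.exp (-((n:ℝ)*t)) * (C * Real.exp (σ*t)) :=
              mul_le_mul_of_nonneg_left (hbound t (Set.mem_Ioi.mpr ht0)) (Real.exp_pos _).le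
          _ = C * (Real.exp (-((n:ℝ)*t)) * Real.exp (σ*t)) := by ring
          _ ≤ C * (Real.exp (-((n:ℝ)*δ/2)) * Real.exp (-t)) := mul_le_mul_of_nonneg_left he1 hC
          _ = Real.exp (-((n:ℝ)*δ/2)) * (C * Real.exp (-t)) := by ring
      have hk' : ∀ k : ℕ, Real.exp (-((n:ℝ)*t)) * (‖b k‖ * t ^ (γ + (k:ℝ) - 1))
          ≤ Real.exp (-((n:ℝ)*δ/2)) * (‖b k‖ * (t ^ (γ + (k:ℝ) - 1) * Real.exp (-t))) := by
        intro k
        calc Real.exp (-((n:ℝ)*t)) * (‖b k‖ * t ^ (γ + (k:ℝ) - 1))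
            = (‖b k‖ * t ^ (γ + (k:ℝ) - 1)) * Real.exp (-((n:ℝ)*t)) := by ring
          _ ≤ (‖b k‖ * t ^ (γ + (k:ℝ) - 1)) * (Real.exp (-((n:ℝ)*δ/2)) * Real.exp (-t)) :=
              mul_le_mul_of_nonneg_left he2
                (mul_nonneg (norm_nonneg _) (Real.rpow_nonneg ht0.le _))
          _ = Real.exp (-((n:ℝ)*δ/2)) * (‖b k‖ * (t ^ (γ + (k:ℝ) - 1) * Real.exp (-t))) := by
              ring
      calc Real.exp (-((n:ℝ)*t)) * ‖g t‖
          ≤ Real.exp (-((n:ℝ)*t)) * (‖f t‖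
              + ∑ k ∈ Finset.range (K+1), ‖b k‖ * t ^ (γ + (k:ℝ) - 1)) :=
            mul_le_mul_of_nonneg_left hgnorm (Real.exp_pos _).le
        _ = Real.exp (-((n:ℝ)*t)) * ‖f t‖
              + ∑ k ∈ Finset.range (K+1),
                Real.exp (-((n:ℝ)*t)) * (‖b k‖ * t ^ (γ + (k:ℝ) - 1)) := by
            rw [mul_add, Finset.mul_sum]
        _ ≤ Real.exp (-((n:ℝ)*δ/2)) * (C * Real.exp (-t))
              + ∑ k ∈ Finset.range (K+1), Real.exp (-((n:ℝ)*δ/2))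
                * (‖b k‖ * (t ^ (γ + (k:ℝ) - 1) * Real.exp (-t))) :=
            add_le_add hf' (Finset.sum_le_sum fun k _ => hk' k)
        _ = Real.exp (-((n:ℝ)*δ/2)) * φ t := by
            rw [hφdef, ← Finset.mul_sum, ← mul_add]
    have hle : ‖∫ t in Set.Ioi δ, Complex.exp (-(n:ℂ) * t) * g t‖
        ≤ ∫ t in Set.Ioi δ, Real.exp (-((n:ℝ) * δ / 2)) * φ t := by
      apply norm_integral_le_of_norm_le (hφint.const_mul _)
      rw [ae_restrict_iff' measurableSet_Ioi]
      exact Filter.Eventually.of_forall hptwise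
    rw [integral_const_mul] at hle
    exact hle
  -- thresholds
  have htend : Filter.Tendsto (fun n : ℕ => ((n:ℝ)) ^ (γ + (K:ℝ) + 1) * Real.exp (-(δ/2) * n))
      Filter.atTop (nhds 0) :=
    (tendsto_rpow_mul_exp_neg_mul_atTop_nhds_zero _ _ (half_pos hδ)).comp
      tendsto_natCast_atTop_atTop
  have hev : ∀ᶠ n : ℕ in Filter.atTop,
      ((n:ℝ)) ^ (γ + (K:ℝ) + 1) * Real.exp (-(δ/2) * n) ≤ 1 :=
    htend.eventually (eventually_le_nhds (by norm_num))
  obtain ⟨N₁, hN₁⟩ := Filter.eventually_atTop.mp hev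
  -- final assembly
  rw [Asymptotics.isBigO_iff]
  refine ⟨M * Real.Gamma (γ + (K:ℝ) + 1) + D, ?_⟩
  rw [Filter.eventually_atTop]
  refine ⟨max (max (⌈2*σ+2⌉₊ + 2) N₁) 1, fun n hn => ?_⟩
  have hn1 : 1 ≤ n := le_trans (le_max_right _ _) hn
  have hnN1 : N₁ ≤ n := le_trans (le_trans (le_max_right _ _) (le_max_left _ _)) hn
  have hn0 : 0 < n := hn1
  have hnceil : ⌈2*σ+2⌉₊ + 2 ≤ n := le_trans (le_trans (le_max_left _ _) (le_max_left _ _)) hn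
  have hn2 : 2 ≤ n := le_trans (Nat.le_add_left 2 _) hnceil
  have hnσ' : 2*σ + 2 ≤ (n:ℝ) := by
    have h1 : ((⌈2*σ+2⌉₊ + 2 : ℕ) : ℝ) ≤ (n:ℝ) := by exact_mod_cast hnceil
    have h2 : (2*σ+2 : ℝ) ≤ (⌈2*σ+2⌉₊ : ℝ) := Nat.le_ceil _
    push_cast at h1
    linarith
  have hσn : σ < (n:ℝ) := by
    rcases le_or_gt 0 σ with h | h
    · linarith
    · have h1 : (1:ℝ) ≤ (n:ℝ) := by exact_mod_cast hn1
      linarith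
  have hkeyn := hkey n hn0 hσn
  have h1 := hB1 n hn0
  have h2 := hB2 n hn2 hnσ'
  have hn' : (0:ℝ) < n := by exact_mod_cast hn0
  have hexple : Real.exp (-((n:ℝ) * δ / 2)) ≤ (n:ℝ) ^ (-(γ + (K:ℝ) + 1)) := by
    have h := hN₁ n hnN1
    have harg : -(δ/2) * (n:ℝ) = -((n:ℝ) * δ / 2) := by ring
    rw [harg] at h
    rw [Real.rpow_neg hn'.le, ← one_div, le_div_iff₀ (Real.rpow_pos_of_pos hn' _)]
    calc Real.exp (-((n:ℝ)*δ/2)) * (n:ℝ) ^ (γ+(K:ℝ)+1)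
        = (n:ℝ) ^ (γ+(K:ℝ)+1) * Real.exp (-((n:ℝ)*δ/2)) := by ring
      _ ≤ 1 := h
  have hnp : (0:ℝ) ≤ (n:ℝ) ^ (-(γ + (K:ℝ) + 1)) := Real.rpow_nonneg hn'.le _
  rw [hkeyn]
  calc ‖(∫ t in Set.Ioc (0:ℝ) δ, Complex.exp (-(n:ℂ) * t) * g t)
        + ∫ t in Set.Ioi δ, Complex.exp (-(n:ℂ) * t) * g t‖
      ≤ ‖∫ t in Set.Ioc (0:ℝ) δ, Complex.exp (-(n:ℂ) * t) * g t‖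
        + ‖∫ t in Set.Ioi δ, Complex.exp (-(n:ℂ) * t) * g t‖ := norm_add_le _ _
    _ ≤ M * Real.Gamma (γ + (K:ℝ) + 1) * (n:ℝ) ^ (-(γ + (K:ℝ) + 1))
        + Real.exp (-((n:ℝ) * δ / 2)) * D := add_le_add h1 h2
    _ ≤ M * Real.Gamma (γ + (K:ℝ) + 1) * (n:ℝ) ^ (-(γ + (K:ℝ) + 1))
        + (n:ℝ) ^ (-(γ + (K:ℝ) + 1)) * D :=
        add_le_add le_rfl (mul_le_mul_of_nonneg_right hexple hD0)
    _ = (M * Real.Gamma (γ + (K:ℝ) + 1) + D) * ((n:ℝ) ^ (-(γ + (K:ℝ) + 1))) := by ring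
    _ = (M * Real.Gamma (γ + (K:ℝ) + 1) + D) * ‖(n:ℝ) ^ (-(γ + (K:ℝ) + 1))‖ := by
        rw [Real.norm_eq_abs, abs_of_nonneg hnp]
end
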